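/- arXiv:1911.06198 — 4 statements merged into one kernel-verified Lean document; each statement's English description precedes it below -/
import Mathlib

section
/- In the deterministic election model with exactly two candidates c_0, c_1, suppose every seed's message m_s satisfies m_s(0) ≥ 0 and m_s(1) ≤ 0 (i.e., every message is weakly favorable to c_0). Then MoV is monotone in the added edge set: for all edge sets F_1 ⊆ F_2 over the voters, MoV(S,M,E∪F_1) ≤ MoV(S,M,E∪F_2). In particular, with unlimited budget, adding all possible edges maximizes ΔMoV^+. -/
open scoped Classical

noncomputable section

/-- `v` is reachable from `s` through the edge set `Es` (every node reaches itself). -/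
def Reaches {V : Type*} (Es : Set (V × V)) (s v : V) : Prop :=
  Relation.ReflTransGen (fun a b => (a, b) ∈ Es) s v

/-- The set of influenced voters: those reachable from some seed in `S`. -/
def influenced {V : Type*} [Fintype V] (Es : Set (V × V)) (S : Set V) : Finset V :=
  Finset.univ.filter (fun v => ∃ s ∈ S, Reaches Es s v)

/-- χ(S,E): the number of influenced voters. -/
def chi {V : Type*} [Fintype V] (Es : Set (V × V)) (S : Set V) : ℕ :=
  (influenced Es S).card

/-- The tie-breaking constant ε = 1/(1 + max_{v,i} π_v(i)). -/
def eps {V : Type*} [Fintype V] {k : ℕ} (π : V → Fin k → ℕ) : ℚ :=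
  1 / (1 + ((Finset.univ.sup fun v => Finset.univ.sup fun i => π v i : ℕ) : ℚ))

/-- The final score π*_v(i) = (1-ε)·π_v(i) + Σ_{s ∈ S, v reachable from s} m_s(i). -/
def finalScore {V : Type*} [Fintype V] {k : ℕ} (Es : Set (V × V)) (π : V → Fin k → ℕ)
    (S : Set V) (m : V → Fin k → ℤ) (v : V) (i : Fin k) : ℚ :=
  (1 - eps π) * (π v i : ℚ) +
    ∑ s ∈ Finset.univ.filter (fun s => s ∈ S ∧ Reaches Es s v), (m s i : ℚ)

/-- V_c: voters whose initial score vector has a strict maximum at `c`. -/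
def initVoters {V : Type*} [Fintype V] {k : ℕ} (π : V → Fin k → ℕ) (c : Fin k) : Finset V :=
  Finset.univ.filter (fun v => ∀ j, j ≠ c → π v j < π v c)

/-- V*_c: voters whose final score vector has a strict maximum at `c`. -/
def finalVoters {V : Type*} [Fintype V] {k : ℕ} (Es : Set (V × V)) (π : V → Fin k → ℕ)
    (S : Set V) (m : V → Fin k → ℤ) (c : Fin k) : Finset V :=
  Finset.univ.filter (fun v => ∀ j, j ≠ c →
    finalScore Es π S m v j < finalScore Es π S m v c)

/-- MoV(S,M,E) = |V*_{c_0}| − max_{c ≠ c_0} |V*_c|. -/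
def MoV {V : Type*} [Fintype V] {k : ℕ} [NeZero k] (Es : Set (V × V)) (π : V → Fin k → ℕ)
    (S : Set V) (m : V → Fin k → ℤ) : ℤ :=
  ((finalVoters Es π S m 0).card : ℤ) -
    (((Finset.univ.erase (0 : Fin k)).sup fun c => (finalVoters Es π S m c).card : ℕ) : ℤ)

/-- |M|: the total budget used by seed set `S` with messages `m`. -/
def totalBudget {V : Type*} [Fintype V] {k : ℕ} (S : Set V) (m : V → Fin k → ℤ) : ℕ :=
  ∑ s ∈ Finset.univ.filter (fun s => s ∈ S), ∑ i, (m s i).natAbs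

end

section Aux
variable {V : Type*} [Fintype V]

/-- score diff -/
noncomputable def Dv (Es : Set (V × V)) (π : V → Fin 2 → ℕ)
    (S : Set V) (m : V → Fin 2 → ℤ) (v : V) : ℚ :=
  finalScore Es π S m v 0 - finalScore Es π S m v 1

lemma reaches_mono {E1 E2 : Set (V × V)} (h : E1 ⊆ E2) {s v : V}
    (hr : Reaches E1 s v) : Reaches E2 s v :=
  Relation.ReflTransGen.mono (p := fun a b => (a, b) ∈ E2) (fun a b hab => h hab) s v hr

lemma Dv_eq (Es : Set (V × V)) (π : V → Fin 2 → ℕ) (S : Set V) (m : V → Fin 2 → ℤ) (v : V) :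
    Dv Es π S m v = (1 - eps π) * ((π v 0 : ℚ) - (π v 1 : ℚ)) +
      ((∑ s ∈ Finset.univ.filter (fun s => s ∈ S ∧ Reaches Es s v), (m s 0 - m s 1) : ℤ) : ℚ) := by
  simp [Dv, finalScore, Finset.sum_sub_distrib]
  ring

lemma Dv_ne_zero (Es : Set (V × V)) (π : V → Fin 2 → ℕ)
    (hinj : ∀ v : V, π v 0 ≠ π v 1) (S : Set V) (m : V → Fin 2 → ℤ) (v : V) :
    Dv Es π S m v ≠ 0 := by
  set M : ℕ := Finset.univ.sup fun v => Finset.univ.sup fun i => π v i with hM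
  have hMv : (Finset.univ.sup fun i => π v i) ≤ M :=
    Finset.le_sup (f := fun v => Finset.univ.sup fun i => π v i) (Finset.mem_univ v)
  have hM0 : π v 0 ≤ M := le_trans (Finset.le_sup (Finset.mem_univ 0)) hMv
  have hM1 : π v 1 ≤ M := le_trans (Finset.le_sup (Finset.mem_univ 1)) hMv
  have hMpos : (0 : ℚ) < 1 + M := by positivity
  have heps : eps π = 1 / (1 + (M : ℚ)) := rfl
  intro h
  rw [Dv_eq] at h
  set N : ℤ := ∑ s ∈ Finset.univ.filter (fun s => s ∈ S ∧ Reaches Es s v), (m s 0 - m s 1) with hN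
  set a : ℤ := (π v 0 : ℤ) - (π v 1 : ℤ) with ha
  have ha0 : a ≠ 0 := by
    simp only [ha, sub_ne_zero]
    exact_mod_cast hinj v
  have haM : |a| ≤ (M : ℤ) := by
    rw [abs_le]; omega
  -- from h : (1 - 1/(1+M)) * a + N = 0, multiply by (1+M):
  have key : (M : ℚ) * ((π v 0 : ℚ) - (π v 1 : ℚ)) = -(N * (1 + M)) := by
    have := h
    rw [heps] at this
    field_simp at this
    linarith
  have keyZ : (M : ℤ) * a = -(N * (1 + M)) := by
    rw [ha]; exact_mod_cast key
  -- (1+M) ∣ M*a, gcd(M,1+M)=1 ⇒ (1+M) ∣ a, but 0 < |a| ≤ M < 1+M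
  have hdvd : ((1 + M : ℤ)) ∣ (M : ℤ) * a := ⟨-N, by linarith [keyZ]⟩
  have hcop : IsCoprime ((1 + M : ℤ)) (M : ℤ) := by
    exact ⟨1, -1, by ring⟩
  have hdvda : ((1 + M : ℤ)) ∣ a := hcop.dvd_of_dvd_mul_left hdvd
  have := Int.le_of_dvd (abs_pos.mpr ha0) ((dvd_abs _ _).mpr hdvda)
  omega

lemma Dv_mono {E1 E2 : Set (V × V)} (h : E1 ⊆ E2) (π : V → Fin 2 → ℕ)
    (S : Set V) (m : V → Fin 2 → ℤ)
    (hm : ∀ s ∈ S, 0 ≤ m s 0 ∧ m s 1 ≤ 0) (v : V) :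
    Dv E1 π S m v ≤ Dv E2 π S m v := by
  rw [Dv_eq, Dv_eq]
  have hsub : (Finset.univ.filter (fun s => s ∈ S ∧ Reaches E1 s v)) ⊆
      (Finset.univ.filter (fun s => s ∈ S ∧ Reaches E2 s v)) := by
    intro s hs
    simp only [Finset.mem_filter] at hs ⊢
    exact ⟨hs.1, hs.2.1, reaches_mono h hs.2.2⟩
  have : ((∑ s ∈ Finset.univ.filter (fun s => s ∈ S ∧ Reaches E1 s v), (m s 0 - m s 1) : ℤ)) ≤
      ∑ s ∈ Finset.univ.filter (fun s => s ∈ S ∧ Reaches E2 s v), (m s 0 - m s 1) := by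
    apply Finset.sum_le_sum_of_subset_of_nonneg hsub
    intro s hs _
    simp only [Finset.mem_filter] at hs
    have := hm s hs.2.1
    omega
  have h2 : ((∑ s ∈ Finset.univ.filter (fun s => s ∈ S ∧ Reaches E1 s v), (m s 0 - m s 1) : ℤ) : ℚ) ≤
      ((∑ s ∈ Finset.univ.filter (fun s => s ∈ S ∧ Reaches E2 s v), (m s 0 - m s 1) : ℤ) : ℚ) := by
    exact_mod_cast this
  linarith

lemma finalVoters0_eq (Es : Set (V × V)) (π : V → Fin 2 → ℕ) (S : Set V) (m : V → Fin 2 → ℤ) :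
    finalVoters Es π S m 0 = Finset.univ.filter (fun v => 0 < Dv Es π S m v) := by
  ext v
  simp only [finalVoters, Finset.mem_filter, Finset.mem_univ, true_and, Dv, sub_pos]
  constructor
  · intro h; exact h 1 (by decide)
  · intro h j hj
    have : j = 1 := by omega
    subst this; exact h

lemma finalVoters1_eq (Es : Set (V × V)) (π : V → Fin 2 → ℕ) (S : Set V) (m : V → Fin 2 → ℤ) :
    finalVoters Es π S m 1 = Finset.univ.filter (fun v => Dv Es π S m v < 0) := by
  ext v
  simp only [finalVoters, Finset.mem_filter, Finset.mem_univ, true_and, Dv, sub_neg]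
  constructor
  · intro h; exact h 0 (by decide)
  · intro h j hj
    have : j = 0 := by omega
    subst this; exact h

lemma MoV_eq (Es : Set (V × V)) (π : V → Fin 2 → ℕ)
    (hinj : ∀ v : V, π v 0 ≠ π v 1) (S : Set V) (m : V → Fin 2 → ℤ) :
    MoV Es π S m = 2 * ((Finset.univ.filter (fun v => 0 < Dv Es π S m v)).card : ℤ)
      - (Fintype.card V : ℤ) := by
  have herase : (Finset.univ.erase (0 : Fin 2)) = {1} := by decide
  rw [MoV, herase, Finset.sup_singleton, finalVoters0_eq, finalVoters1_eq]
  have : (Finset.univ.filter (fun v => Dv Es π S m v < 0)) =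
      (Finset.univ.filter (fun v => 0 < Dv Es π S m v))ᶜ := by
    ext v
    simp only [Finset.mem_filter, Finset.mem_compl, Finset.mem_univ, true_and, not_lt]
    constructor
    · intro h; linarith
    · intro h
      rcases lt_or_eq_of_le h with h' | h'
      · linarith
      · exact absurd h' (Dv_ne_zero Es π hinj S m v)
  rw [this, Finset.card_compl]
  have hle : (Finset.univ.filter (fun v => 0 < Dv Es π S m v)).card ≤ Fintype.card V :=
    le_trans (Finset.card_filter_le _ _) (by simp)
  push_cast [Nat.cast_sub hle]
  ring

lemma MoV_mono {E1 E2 : Set (V × V)} (h : E1 ⊆ E2) (π : V → Fin 2 → ℕ)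
    (hinj : ∀ v : V, π v 0 ≠ π v 1) (S : Set V) (m : V → Fin 2 → ℤ)
    (hm : ∀ s ∈ S, 0 ≤ m s 0 ∧ m s 1 ≤ 0) :
    MoV E1 π S m ≤ MoV E2 π S m := by
  rw [MoV_eq E1 π hinj S m, MoV_eq E2 π hinj S m]
  have hsub : (Finset.univ.filter (fun v => 0 < Dv E1 π S m v)) ⊆
      (Finset.univ.filter (fun v => 0 < Dv E2 π S m v)) := by
    intro v hv
    simp only [Finset.mem_filter, Finset.mem_univ, true_and] at hv ⊢
    exact lt_of_lt_of_le hv (Dv_mono h π S m hm v)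
  have := Finset.card_le_card hsub
  omega

end Aux

/-- With two candidates and every seed's message weakly favorable to c₀, MoV is monotone in
the added edge set; in particular adding all possible edges maximizes ΔMoV⁺. -/
theorem edge_addition_monotone_two_candidates {V : Type*} [Fintype V]
    (Es : Set (V × V)) (π : V → Fin 2 → ℕ)
    (hinj : ∀ v : V, π v 0 ≠ π v 1)
    (S : Set V) (m : V → Fin 2 → ℤ)
    (hm : ∀ s ∈ S, 0 ≤ m s 0 ∧ m s 1 ≤ 0) :
    (∀ F1 F2 : Set (V × V), F1 ⊆ F2 →
        MoV (Es ∪ F1) π S m ≤ MoV (Es ∪ F2) π S m) ∧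
    (∀ E' : Set (V × V),
        MoV (Es ∪ E') π S m - MoV Es π S m ≤
          MoV (Es ∪ (Set.univ \ Es)) π S m - MoV Es π S m) := by
  constructor
  · intro F1 F2 hF
    exact MoV_mono (Set.union_subset_union_right Es hF) π hinj S m hm
  · intro E'
    have h1 : Es ∪ E' ⊆ Es ∪ (Set.univ \ Es) := by
      rw [Set.union_diff_self, Set.union_univ]
      exact Set.subset_univ _
    linarith [MoV_mono h1 π hinj S m hm]
end

section
/- Let G=(X,N) be an undirected graph with g = |X| ≥ 1 vertices and n = |N| ≥ 2 edges. Construct the deterministic election instance with three candidates c_0, c_1, c_2: a directed line L_1 of ng−g nodes, each with score vector ⟨2,0,1⟩, whose first node is the unique seed, sending the message +1 on c_2; for each vertex x ∈ X a node v_x with score vector ⟨2,0,1⟩ and an edge from the last node of L_1 to v_x; for each edge z ∈ N of G a directed line L_z of g nodes, each with score vector ⟨0,2,1⟩, with an edge from v_x to the first node of L_z for each endpoint x of z; and n²g² isolated nodes with score vector ⟨2,1,0⟩ together with n²g² isolated nodes with score vector ⟨1,2,0⟩. Then max{ ΔMoV^-(E') : E' ⊆ E } = α(G), the maximum cardinality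 of an independent set of G. -/
open scoped Classical

section IndepSet

variable {X : Type*} [Fintype X] [DecidableEq X]
  (G : SimpleGraph X) [DecidableRel G.Adj] [Fintype G.edgeSet] (n g : ℕ)

/-- Voters: the line L₁ of ng−g nodes, a node `v_x` for each vertex of `G`, a line L_z of
g nodes for each edge `z` of `G`, and 2·n²g² isolated nodes of two kinds. -/
abbrev ISVoter :=
  Fin (n * g - g) ⊕ (X ⊕ ((G.edgeSet × Fin g) ⊕ (Fin (n ^ 2 * g ^ 2) ⊕ Fin (n ^ 2 * g ^ 2))))

/-- Edges: L₁ is a directed line; its last node points to every `v_x`; `v_x` points to the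
first node of L_z whenever `x` is an endpoint of `z`; each L_z is a directed line. -/
def ISEdges : Set (ISVoter G n g × ISVoter G n g) :=
  { p | (∃ i j : Fin (n * g - g), (i : ℕ) + 1 = (j : ℕ) ∧
          p.1 = Sum.inl i ∧ p.2 = Sum.inl j) ∨
        (∃ (i : Fin (n * g - g)) (x : X), (i : ℕ) + 1 = n * g - g ∧
          p.1 = Sum.inl i ∧ p.2 = Sum.inr (Sum.inl x)) ∨
        (∃ (x : X) (z : G.edgeSet) (j : Fin g), x ∈ (z : Sym2 X) ∧ (j : ℕ) = 0 ∧
          p.1 = Sum.inr (Sum.inl x) ∧ p.2 = Sum.inr (Sum.inr (Sum.inl (z, j)))) ∨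
        (∃ (z : G.edgeSet) (i j : Fin g), (i : ℕ) + 1 = (j : ℕ) ∧
          p.1 = Sum.inr (Sum.inr (Sum.inl (z, i))) ∧
          p.2 = Sum.inr (Sum.inr (Sum.inl (z, j)))) }

/-- Scores: L₁ and the `v_x` have ⟨2,0,1⟩; the L_z have ⟨0,2,1⟩; the isolated nodes have
⟨2,1,0⟩ and ⟨1,2,0⟩ respectively. -/
def ISScores : ISVoter G n g → Fin 3 → ℕ
  | Sum.inl _ => ![2, 0, 1]
  | Sum.inr (Sum.inl _) => ![2, 0, 1]
  | Sum.inr (Sum.inr (Sum.inl _)) => ![0, 2, 1]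
  | Sum.inr (Sum.inr (Sum.inr (Sum.inl _))) => ![2, 1, 0]
  | Sum.inr (Sum.inr (Sum.inr (Sum.inr _))) => ![1, 2, 0]

/-- The unique seed is the first node of L₁. -/
def ISSeeds : Set (ISVoter G n g) :=
  { v | ∃ i : Fin (n * g - g), (i : ℕ) = 0 ∧ v = Sum.inl i }

/-- The seed sends a single positive news article on c₂. -/
def ISMsg : ISVoter G n g → Fin 3 → ℤ := fun _ => ![0, 0, 1]


set_option linter.unusedSectionVars false

namespace ISAux

variable {X : Type*} [Fintype X] [DecidableEq X]
  {G : SimpleGraph X} [DecidableRel G.Adj] [Fintype G.edgeSet] {n g : ℕ}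

lemma hLpos (hg : 1 ≤ g) (hn : 2 ≤ n) : 0 < n * g - g := by
  have : 2 * g ≤ n * g := Nat.mul_le_mul_right g hn
  omega

lemma seeds_eq (hL : 0 < n * g - g) :
    ISSeeds G n g = {Sum.inl ⟨0, hL⟩} := by
  ext v
  constructor
  · rintro ⟨i, hi, rfl⟩
    have : i = ⟨0, hL⟩ := Fin.ext hi
    simp [this]
  · rintro rfl
    exact ⟨⟨0, hL⟩, rfl, rfl⟩

/-- no node reaches an isolated node except itself; in particular the seed doesn't. -/
lemma not_reaches_iso (Es : Set (ISVoter G n g × ISVoter G n g)) (hsub : Es ⊆ ISEdges G n g)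
    (hL : 0 < n * g - g) (w : Fin (n ^ 2 * g ^ 2) ⊕ Fin (n ^ 2 * g ^ 2))
    (h : Reaches Es (Sum.inl ⟨0, hL⟩) (Sum.inr (Sum.inr (Sum.inr w)))) : False := by
  rcases Relation.ReflTransGen.cases_tail h with h | ⟨b, hb, he⟩
  · exact absurd h (by simp)
  · rcases hsub he with ⟨i, j, _, _, h2⟩ | ⟨i, x, _, _, h2⟩ |
      ⟨x, z, j, _, _, _, h2⟩ | ⟨z, i, j, _, _, h2⟩ <;> simp at h2

/-- influenced line nodes form a prefix. -/
lemma reaches_line_prefix (Es : Set (ISVoter G n g × ISVoter G n g))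
    (hsub : Es ⊆ ISEdges G n g) (hL : 0 < n * g - g) {v : ISVoter G n g}
    (h : Reaches Es (Sum.inl ⟨0, hL⟩) v) :
    ∀ j : Fin (n * g - g), v = Sum.inl j →
      ∀ i : Fin (n * g - g), (i : ℕ) ≤ (j : ℕ) → Reaches Es (Sum.inl ⟨0, hL⟩) (Sum.inl i) := by
  induction h with
  | refl =>
    rintro j hj i hi
    have hj0 : (j : ℕ) = 0 := by
      have := hj.symm
      simp only [Sum.inl.injEq] at this
      simpa using congrArg Fin.val this
    have hi0 : (i : ℕ) = 0 := by omega
    have : i = ⟨0, hL⟩ := Fin.ext (by simp [hi0])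
    rw [this]
    exact Relation.ReflTransGen.refl
  | tail hab e ih =>
    rintro j rfl i hi
    rcases hsub e with ⟨i0, j0, hij, hb, h2⟩ | ⟨i0, x, _, _, h2⟩ |
      ⟨x, z, j0, _, _, _, h2⟩ | ⟨z, i0, j0, _, _, h2⟩
    · simp only [Sum.inl.injEq] at h2
      subst h2
      rcases Nat.lt_or_ge (i : ℕ) (j : ℕ) with hlt | hge
      · exact ih i0 hb i (by omega)
      · have : i = j := Fin.ext (by omega)
        subst this
        exact Relation.ReflTransGen.tail hab e
    · simp at h2
    · simp at h2
    · simp at h2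

/-- a reached `v_x` node requires the last line node to be reached. -/
lemma reaches_vx_struct (Es : Set (ISVoter G n g × ISVoter G n g))
    (hsub : Es ⊆ ISEdges G n g) (hL : 0 < n * g - g) {x : X}
    (h : Reaches Es (Sum.inl ⟨0, hL⟩) (Sum.inr (Sum.inl x))) :
    ∃ i : Fin (n * g - g), (i : ℕ) + 1 = n * g - g ∧
      Reaches Es (Sum.inl ⟨0, hL⟩) (Sum.inl i) ∧
      ((Sum.inl i : ISVoter G n g), (Sum.inr (Sum.inl x) : ISVoter G n g)) ∈ Es := by
  rcases Relation.ReflTransGen.cases_tail h with h | ⟨b, hb, he⟩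
  · exact absurd h (by simp)
  · rcases hsub he with ⟨i, j, _, _, h2⟩ | ⟨i, x', hi, hb1, h2⟩ |
      ⟨x', z, j, _, _, _, h2⟩ | ⟨z, i, j, _, _, h2⟩
    · simp at h2
    · subst hb1
      exact ⟨i, hi, hb, he⟩
    · simp at h2
    · simp at h2

/-- a reached edge-line node requires a reached endpoint `v_x`. -/
lemma reaches_en_struct (Es : Set (ISVoter G n g × ISVoter G n g))
    (hsub : Es ⊆ ISEdges G n g) (hL : 0 < n * g - g) {v : ISVoter G n g}
    (h : Reaches Es (Sum.inl ⟨0, hL⟩) v) :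
    ∀ (z : G.edgeSet) (j : Fin g), v = Sum.inr (Sum.inr (Sum.inl (z, j))) →
      ∃ x : X, x ∈ (z : Sym2 X) ∧ Reaches Es (Sum.inl ⟨0, hL⟩) (Sum.inr (Sum.inl x)) := by
  induction h with
  | refl =>
    rintro z j hj
    exact absurd hj (by simp)
  | tail hab e ih =>
    rintro z j rfl
    rcases hsub e with ⟨i0, j0, _, _, h2⟩ | ⟨i0, x', _, _, h2⟩ |
      ⟨x', z', j0, hx, _, hb1, h2⟩ | ⟨z', i0, j0, _, hb1, h2⟩
    · simp at h2
    · simp at h2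
    · simp only [Sum.inr.injEq, Sum.inl.injEq, Prod.mk.injEq] at h2
      obtain ⟨hz, -⟩ := h2
      subst hb1
      exact ⟨x', hz ▸ hx, hab⟩
    · simp only [Sum.inr.injEq, Sum.inl.injEq, Prod.mk.injEq] at h2
      obtain ⟨hz, -⟩ := h2
      subst hb1
      subst hz
      exact ih z i0 rfl

/-- the seed reaches every line node if the chain edges are present. -/
lemma reaches_line_all (Es : Set (ISVoter G n g × ISVoter G n g))
    (hchain : ∀ i j : Fin (n * g - g), (i : ℕ) + 1 = (j : ℕ) →
      ((Sum.inl i : ISVoter G n g), (Sum.inl j : ISVoter G n g)) ∈ Es)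
    (hL : 0 < n * g - g) (i : Fin (n * g - g)) :
    Reaches Es (Sum.inl ⟨0, hL⟩) (Sum.inl i) := by
  obtain ⟨iv, hlt⟩ := i
  induction iv with
  | zero => exact Relation.ReflTransGen.refl
  | succ k ih =>
    have hk : k < n * g - g := by omega
    exact Relation.ReflTransGen.tail (ih hk) (hchain ⟨k, hk⟩ ⟨k + 1, hlt⟩ rfl)

/-- the seed reaches every node of an edge line whose first node it reaches,
if the chain edges are present. -/
lemma reaches_en_all (Es : Set (ISVoter G n g × ISVoter G n g))
    (hchain : ∀ (z : G.edgeSet) (i j : Fin g), (i : ℕ) + 1 = (j : ℕ) →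
      ((Sum.inr (Sum.inr (Sum.inl (z, i))) : ISVoter G n g),
        (Sum.inr (Sum.inr (Sum.inl (z, j))) : ISVoter G n g)) ∈ Es)
    (hL : 0 < n * g - g) (hgpos : 0 < g) (z : G.edgeSet)
    (h0 : Reaches Es (Sum.inl ⟨0, hL⟩) (Sum.inr (Sum.inr (Sum.inl (z, ⟨0, hgpos⟩)))))
    (j : Fin g) :
    Reaches Es (Sum.inl ⟨0, hL⟩) (Sum.inr (Sum.inr (Sum.inl (z, j)))) := by
  obtain ⟨jv, hlt⟩ := j
  induction jv with
  | zero => exact h0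
  | succ k ih =>
    have hk : k < g := by omega
    exact Relation.ReflTransGen.tail (ih hk) (hchain z ⟨k, hk⟩ ⟨k + 1, hlt⟩ rfl)

lemma eps_eq (hg : 1 ≤ g) (hn : 2 ≤ n) :
    eps (ISScores G n g) = 1 / 3 := by
  have hL : 0 < n * g - g := hLpos hg hn
  have hsup : (Finset.univ.sup fun v : ISVoter G n g =>
      Finset.univ.sup fun i => ISScores G n g v i) = 2 := by
    apply le_antisymm
    · apply Finset.sup_le
      intro v _
      apply Finset.sup_le
      intro i _
      rcases v with i' | x | ⟨z, j⟩ | a | b <;> fin_cases i <;> simp [ISScores]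
    · refine le_trans ?_ (Finset.le_sup (Finset.mem_univ (Sum.inl ⟨0, hL⟩ : ISVoter G n g)))
      refine le_trans ?_ (Finset.le_sup (Finset.mem_univ (0 : Fin 3)))
      simp [ISScores]
  rw [eps, hsup]
  norm_num

lemma finalScore_eq (hg : 1 ≤ g) (hn : 2 ≤ n)
    (Es : Set (ISVoter G n g × ISVoter G n g)) (v : ISVoter G n g) (i : Fin 3) :
    finalScore Es (ISScores G n g) (ISSeeds G n g) (ISMsg G n g) v i
      = 2 / 3 * (ISScores G n g v i : ℚ) +
        (if Reaches Es (Sum.inl ⟨0, hLpos hg hn⟩) v then ((![0, 0, 1] : Fin 3 → ℤ) i : ℚ)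
          else 0) := by
  have hL : 0 < n * g - g := hLpos hg hn
  rw [finalScore, eps_eq hg hn]
  have hfilter : Finset.univ.filter
      (fun s => s ∈ ISSeeds G n g ∧ Reaches Es s v)
      = if Reaches Es (Sum.inl (⟨0, hL⟩ : Fin (n * g - g))) v
          then {(Sum.inl ⟨0, hL⟩ : ISVoter G n g)} else ∅ := by
    ext s
    rw [seeds_eq hL]
    split
    · simp only [Finset.mem_filter, Finset.mem_univ, true_and, Finset.mem_singleton,
        Set.mem_singleton_iff]
      constructor
      · rintro ⟨rfl, -⟩; rfl
      · rintro rfl; exact ⟨rfl, by assumption⟩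
    · simp only [Finset.mem_filter, Finset.mem_univ, true_and, Finset.notMem_empty,
        iff_false, not_and, Set.mem_singleton_iff]
      rintro rfl
      assumption
  rw [hfilter]
  split
  · rw [Finset.sum_singleton]
    norm_num [ISMsg]
  · norm_num


lemma forall_ne0 (P : Fin 3 → Prop) : (∀ j, j ≠ (0 : Fin 3) → P j) ↔ P 1 ∧ P 2 := by
  constructor
  · exact fun h => ⟨h 1 (by decide), h 2 (by decide)⟩
  · rintro ⟨h1, h2⟩ j hj
    fin_cases j
    · simp at hj
    · exact h1
    · exact h2

lemma forall_ne1 (P : Fin 3 → Prop) : (∀ j, j ≠ (1 : Fin 3) → P j) ↔ P 0 ∧ P 2 := by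
  constructor
  · exact fun h => ⟨h 0 (by decide), h 2 (by decide)⟩
  · rintro ⟨h1, h2⟩ j hj
    fin_cases j
    · exact h1
    · simp at hj
    · exact h2

lemma forall_ne2 (P : Fin 3 → Prop) : (∀ j, j ≠ (2 : Fin 3) → P j) ↔ P 0 ∧ P 1 := by
  constructor
  · exact fun h => ⟨h 0 (by decide), h 1 (by decide)⟩
  · rintro ⟨h1, h2⟩ j hj
    fin_cases j
    · exact h1
    · exact h2
    · simp at hj

lemma fv0_inl (hg : 1 ≤ g) (hn : 2 ≤ n) (Es : Set (ISVoter G n g × ISVoter G n g))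
    (i : Fin (n * g - g)) :
    (Sum.inl i : ISVoter G n g) ∈ finalVoters Es (ISScores G n g) (ISSeeds G n g) (ISMsg G n g) 0 ↔
      ¬ Reaches Es (Sum.inl ⟨0, hLpos hg hn⟩) (Sum.inl i : ISVoter G n g) := by
  simp only [finalVoters, Finset.mem_filter, Finset.mem_univ, true_and,
    finalScore_eq hg hn, ISScores, forall_ne0]
  by_cases hinf : Reaches Es (Sum.inl ⟨0, hLpos hg hn⟩) (Sum.inl i : ISVoter G n g)
  · simp only [if_pos hinf]
    try simp [hinf]
    try norm_num
  · simp only [if_neg hinf]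
    try simp [hinf]
    try norm_num

lemma fv1_inl (hg : 1 ≤ g) (hn : 2 ≤ n) (Es : Set (ISVoter G n g × ISVoter G n g))
    (i : Fin (n * g - g)) :
    (Sum.inl i : ISVoter G n g) ∉ finalVoters Es (ISScores G n g) (ISSeeds G n g) (ISMsg G n g) 1 := by
  simp only [finalVoters, Finset.mem_filter, Finset.mem_univ, true_and,
    finalScore_eq hg hn, ISScores, forall_ne1]
  by_cases hinf : Reaches Es (Sum.inl ⟨0, hLpos hg hn⟩) (Sum.inl i : ISVoter G n g)
  · simp only [if_pos hinf]
    try simp [hinf]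
    try norm_num
  · simp only [if_neg hinf]
    try simp [hinf]
    try norm_num

lemma fv2_inl (hg : 1 ≤ g) (hn : 2 ≤ n) (Es : Set (ISVoter G n g × ISVoter G n g))
    (i : Fin (n * g - g)) :
    (Sum.inl i : ISVoter G n g) ∈ finalVoters Es (ISScores G n g) (ISSeeds G n g) (ISMsg G n g) 2 ↔
      Reaches Es (Sum.inl ⟨0, hLpos hg hn⟩) (Sum.inl i : ISVoter G n g) := by
  simp only [finalVoters, Finset.mem_filter, Finset.mem_univ, true_and,
    finalScore_eq hg hn, ISScores, forall_ne2]
  by_cases hinf : Reaches Es (Sum.inl ⟨0, hLpos hg hn⟩) (Sum.inl i : ISVoter G n g)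
  · simp only [if_pos hinf]
    try simp [hinf]
    try norm_num
  · simp only [if_neg hinf]
    try simp [hinf]
    try norm_num

lemma fv0_vx (hg : 1 ≤ g) (hn : 2 ≤ n) (Es : Set (ISVoter G n g × ISVoter G n g))
    (x : X) :
    (Sum.inr (Sum.inl x) : ISVoter G n g) ∈ finalVoters Es (ISScores G n g) (ISSeeds G n g) (ISMsg G n g) 0 ↔
      ¬ Reaches Es (Sum.inl ⟨0, hLpos hg hn⟩) (Sum.inr (Sum.inl x) : ISVoter G n g) := by
  simp only [finalVoters, Finset.mem_filter, Finset.mem_univ, true_and,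
    finalScore_eq hg hn, ISScores, forall_ne0]
  by_cases hinf : Reaches Es (Sum.inl ⟨0, hLpos hg hn⟩) (Sum.inr (Sum.inl x) : ISVoter G n g)
  · simp only [if_pos hinf]
    try simp [hinf]
    try norm_num
  · simp only [if_neg hinf]
    try simp [hinf]
    try norm_num

lemma fv1_vx (hg : 1 ≤ g) (hn : 2 ≤ n) (Es : Set (ISVoter G n g × ISVoter G n g))
    (x : X) :
    (Sum.inr (Sum.inl x) : ISVoter G n g) ∉ finalVoters Es (ISScores G n g) (ISSeeds G n g) (ISMsg G n g) 1 := by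
  simp only [finalVoters, Finset.mem_filter, Finset.mem_univ, true_and,
    finalScore_eq hg hn, ISScores, forall_ne1]
  by_cases hinf : Reaches Es (Sum.inl ⟨0, hLpos hg hn⟩) (Sum.inr (Sum.inl x) : ISVoter G n g)
  · simp only [if_pos hinf]
    try simp [hinf]
    try norm_num
  · simp only [if_neg hinf]
    try simp [hinf]
    try norm_num

lemma fv2_vx (hg : 1 ≤ g) (hn : 2 ≤ n) (Es : Set (ISVoter G n g × ISVoter G n g))
    (x : X) :
    (Sum.inr (Sum.inl x) : ISVoter G n g) ∈ finalVoters Es (ISScores G n g) (ISSeeds G n g) (ISMsg G n g) 2 ↔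
      Reaches Es (Sum.inl ⟨0, hLpos hg hn⟩) (Sum.inr (Sum.inl x) : ISVoter G n g) := by
  simp only [finalVoters, Finset.mem_filter, Finset.mem_univ, true_and,
    finalScore_eq hg hn, ISScores, forall_ne2]
  by_cases hinf : Reaches Es (Sum.inl ⟨0, hLpos hg hn⟩) (Sum.inr (Sum.inl x) : ISVoter G n g)
  · simp only [if_pos hinf]
    try simp [hinf]
    try norm_num
  · simp only [if_neg hinf]
    try simp [hinf]
    try norm_num

lemma fv0_en (hg : 1 ≤ g) (hn : 2 ≤ n) (Es : Set (ISVoter G n g × ISVoter G n g))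
    (z : G.edgeSet) (j : Fin g) :
    (Sum.inr (Sum.inr (Sum.inl (z, j))) : ISVoter G n g) ∉ finalVoters Es (ISScores G n g) (ISSeeds G n g) (ISMsg G n g) 0 := by
  simp only [finalVoters, Finset.mem_filter, Finset.mem_univ, true_and,
    finalScore_eq hg hn, ISScores, forall_ne0]
  by_cases hinf : Reaches Es (Sum.inl ⟨0, hLpos hg hn⟩) (Sum.inr (Sum.inr (Sum.inl (z, j))) : ISVoter G n g)
  · simp only [if_pos hinf]
    try simp [hinf]
    try norm_num
  · simp only [if_neg hinf]
    try simp [hinf]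
    try norm_num

lemma fv1_en (hg : 1 ≤ g) (hn : 2 ≤ n) (Es : Set (ISVoter G n g × ISVoter G n g))
    (z : G.edgeSet) (j : Fin g) :
    (Sum.inr (Sum.inr (Sum.inl (z, j))) : ISVoter G n g) ∈ finalVoters Es (ISScores G n g) (ISSeeds G n g) (ISMsg G n g) 1 ↔
      ¬ Reaches Es (Sum.inl ⟨0, hLpos hg hn⟩) (Sum.inr (Sum.inr (Sum.inl (z, j))) : ISVoter G n g) := by
  simp only [finalVoters, Finset.mem_filter, Finset.mem_univ, true_and,
    finalScore_eq hg hn, ISScores, forall_ne1]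
  by_cases hinf : Reaches Es (Sum.inl ⟨0, hLpos hg hn⟩) (Sum.inr (Sum.inr (Sum.inl (z, j))) : ISVoter G n g)
  · simp only [if_pos hinf]
    try simp [hinf]
    try norm_num
  · simp only [if_neg hinf]
    try simp [hinf]
    try norm_num

lemma fv2_en (hg : 1 ≤ g) (hn : 2 ≤ n) (Es : Set (ISVoter G n g × ISVoter G n g))
    (z : G.edgeSet) (j : Fin g) :
    (Sum.inr (Sum.inr (Sum.inl (z, j))) : ISVoter G n g) ∈ finalVoters Es (ISScores G n g) (ISSeeds G n g) (ISMsg G n g) 2 ↔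
      Reaches Es (Sum.inl ⟨0, hLpos hg hn⟩) (Sum.inr (Sum.inr (Sum.inl (z, j))) : ISVoter G n g) := by
  simp only [finalVoters, Finset.mem_filter, Finset.mem_univ, true_and,
    finalScore_eq hg hn, ISScores, forall_ne2]
  by_cases hinf : Reaches Es (Sum.inl ⟨0, hLpos hg hn⟩) (Sum.inr (Sum.inr (Sum.inl (z, j))) : ISVoter G n g)
  · simp only [if_pos hinf]
    try simp [hinf]
    try norm_num
  · simp only [if_neg hinf]
    try simp [hinf]
    try norm_num

lemma fv0_isoA (hg : 1 ≤ g) (hn : 2 ≤ n) (Es : Set (ISVoter G n g × ISVoter G n g))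
    (a : Fin (n ^ 2 * g ^ 2)) :
    (Sum.inr (Sum.inr (Sum.inr (Sum.inl a))) : ISVoter G n g) ∈ finalVoters Es (ISScores G n g) (ISSeeds G n g) (ISMsg G n g) 0 := by
  simp only [finalVoters, Finset.mem_filter, Finset.mem_univ, true_and,
    finalScore_eq hg hn, ISScores, forall_ne0]
  by_cases hinf : Reaches Es (Sum.inl ⟨0, hLpos hg hn⟩) (Sum.inr (Sum.inr (Sum.inr (Sum.inl a))) : ISVoter G n g)
  · simp only [if_pos hinf]
    try simp [hinf]
    try norm_num
  · simp only [if_neg hinf]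
    try simp [hinf]
    try norm_num

lemma fv1_isoA (hg : 1 ≤ g) (hn : 2 ≤ n) (Es : Set (ISVoter G n g × ISVoter G n g))
    (a : Fin (n ^ 2 * g ^ 2)) :
    (Sum.inr (Sum.inr (Sum.inr (Sum.inl a))) : ISVoter G n g) ∉ finalVoters Es (ISScores G n g) (ISSeeds G n g) (ISMsg G n g) 1 := by
  simp only [finalVoters, Finset.mem_filter, Finset.mem_univ, true_and,
    finalScore_eq hg hn, ISScores, forall_ne1]
  by_cases hinf : Reaches Es (Sum.inl ⟨0, hLpos hg hn⟩) (Sum.inr (Sum.inr (Sum.inr (Sum.inl a))) : ISVoter G n g)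
  · simp only [if_pos hinf]
    try simp [hinf]
    try norm_num
  · simp only [if_neg hinf]
    try simp [hinf]
    try norm_num

lemma fv2_isoA (hg : 1 ≤ g) (hn : 2 ≤ n) (Es : Set (ISVoter G n g × ISVoter G n g))
    (a : Fin (n ^ 2 * g ^ 2)) :
    (Sum.inr (Sum.inr (Sum.inr (Sum.inl a))) : ISVoter G n g) ∉ finalVoters Es (ISScores G n g) (ISSeeds G n g) (ISMsg G n g) 2 := by
  simp only [finalVoters, Finset.mem_filter, Finset.mem_univ, true_and,
    finalScore_eq hg hn, ISScores, forall_ne2]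
  by_cases hinf : Reaches Es (Sum.inl ⟨0, hLpos hg hn⟩) (Sum.inr (Sum.inr (Sum.inr (Sum.inl a))) : ISVoter G n g)
  · simp only [if_pos hinf]
    try simp [hinf]
    try norm_num
  · simp only [if_neg hinf]
    try simp [hinf]
    try norm_num

lemma fv0_isoB (hg : 1 ≤ g) (hn : 2 ≤ n) (Es : Set (ISVoter G n g × ISVoter G n g))
    (b : Fin (n ^ 2 * g ^ 2)) :
    (Sum.inr (Sum.inr (Sum.inr (Sum.inr b))) : ISVoter G n g) ∉ finalVoters Es (ISScores G n g) (ISSeeds G n g) (ISMsg G n g) 0 := by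
  simp only [finalVoters, Finset.mem_filter, Finset.mem_univ, true_and,
    finalScore_eq hg hn, ISScores, forall_ne0]
  by_cases hinf : Reaches Es (Sum.inl ⟨0, hLpos hg hn⟩) (Sum.inr (Sum.inr (Sum.inr (Sum.inr b))) : ISVoter G n g)
  · simp only [if_pos hinf]
    try simp [hinf]
    try norm_num
  · simp only [if_neg hinf]
    try simp [hinf]
    try norm_num

lemma fv1_isoB (hg : 1 ≤ g) (hn : 2 ≤ n) (Es : Set (ISVoter G n g × ISVoter G n g))
    (b : Fin (n ^ 2 * g ^ 2)) :
    (Sum.inr (Sum.inr (Sum.inr (Sum.inr b))) : ISVoter G n g) ∈ finalVoters Es (ISScores G n g) (ISSeeds G n g) (ISMsg G n g) 1 := by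
  simp only [finalVoters, Finset.mem_filter, Finset.mem_univ, true_and,
    finalScore_eq hg hn, ISScores, forall_ne1]
  by_cases hinf : Reaches Es (Sum.inl ⟨0, hLpos hg hn⟩) (Sum.inr (Sum.inr (Sum.inr (Sum.inr b))) : ISVoter G n g)
  · simp only [if_pos hinf]
    try simp [hinf]
    try norm_num
  · simp only [if_neg hinf]
    try simp [hinf]
    try norm_num

lemma fv2_isoB (hg : 1 ≤ g) (hn : 2 ≤ n) (Es : Set (ISVoter G n g × ISVoter G n g))
    (b : Fin (n ^ 2 * g ^ 2)) :
    (Sum.inr (Sum.inr (Sum.inr (Sum.inr b))) : ISVoter G n g) ∉ finalVoters Es (ISScores G n g) (ISSeeds G n g) (ISMsg G n g) 2 := by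
  simp only [finalVoters, Finset.mem_filter, Finset.mem_univ, true_and,
    finalScore_eq hg hn, ISScores, forall_ne2]
  by_cases hinf : Reaches Es (Sum.inl ⟨0, hLpos hg hn⟩) (Sum.inr (Sum.inr (Sum.inr (Sum.inr b))) : ISVoter G n g)
  · simp only [if_pos hinf]
    try simp [hinf]
    try norm_num
  · simp only [if_neg hinf]
    try simp [hinf]
    try norm_num


section Cards

/-- abbreviations for the three uninfluenced counts -/
noncomputable def u0L (hg : 1 ≤ g) (hn : 2 ≤ n) (Es : Set (ISVoter G n g × ISVoter G n g)) : ℕ := (Finset.univ.filter fun i : Fin (n * g - g) =>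
    ¬ Reaches Es (Sum.inl ⟨0, hLpos hg hn⟩) (Sum.inl i)).card

noncomputable def u0X (hg : 1 ≤ g) (hn : 2 ≤ n) (Es : Set (ISVoter G n g × ISVoter G n g)) : ℕ := (Finset.univ.filter fun x : X =>
    ¬ Reaches Es (Sum.inl ⟨0, hLpos hg hn⟩) (Sum.inr (Sum.inl x))).card

noncomputable def u1E (hg : 1 ≤ g) (hn : 2 ≤ n) (Es : Set (ISVoter G n g × ISVoter G n g)) : ℕ := (Finset.univ.filter fun p : G.edgeSet × Fin g =>
    ¬ Reaches Es (Sum.inl ⟨0, hLpos hg hn⟩) (Sum.inr (Sum.inr (Sum.inl p)))).card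

lemma card_univ_filter (V : Type*) [Fintype V] (S : Finset V) :
    (Finset.univ.filter fun v : V => v ∈ S) = S := by
  ext v; simp

lemma card_fv0 (hg : 1 ≤ g) (hn : 2 ≤ n) (Es : Set (ISVoter G n g × ISVoter G n g)) :
    (finalVoters Es (ISScores G n g) (ISSeeds G n g) (ISMsg G n g) 0).card
      = n ^ 2 * g ^ 2 + (u0L hg hn Es + u0X hg hn Es) := by
  classical
  set FV := finalVoters Es (ISScores G n g) (ISSeeds G n g) (ISMsg G n g) 0 with hFV
  have h1 : FV.card = ∑ v : ISVoter G n g, if v ∈ FV then 1 else 0 := by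
    rw [Finset.sum_ite_mem, Finset.univ_inter]
    exact Finset.card_eq_sum_ones FV
  rw [h1]
  rw [Fintype.sum_sum_type, Fintype.sum_sum_type, Fintype.sum_sum_type,
    Fintype.sum_sum_type, Fintype.sum_prod_type]
  simp only [hFV, fv0_inl hg hn Es, fv0_vx hg hn Es, fv0_en hg hn Es,
    fv0_isoA hg hn Es, fv0_isoB hg hn Es, if_true, if_false, ite_true, ite_false]
  simp only [Finset.sum_const, Finset.card_univ, Fintype.card_fin, smul_eq_mul, mul_one,
    Finset.sum_const_zero, add_zero]
  rw [u0L, u0X, Finset.card_filter, Finset.card_filter]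
  simp only [mul_zero, zero_add, add_zero]
  ring

lemma card_fv1 (hg : 1 ≤ g) (hn : 2 ≤ n) (Es : Set (ISVoter G n g × ISVoter G n g)) :
    (finalVoters Es (ISScores G n g) (ISSeeds G n g) (ISMsg G n g) 1).card
      = n ^ 2 * g ^ 2 + u1E hg hn Es := by
  classical
  set FV := finalVoters Es (ISScores G n g) (ISSeeds G n g) (ISMsg G n g) 1 with hFV
  have h1 : FV.card = ∑ v : ISVoter G n g, if v ∈ FV then 1 else 0 := by
    rw [Finset.sum_ite_mem, Finset.univ_inter]
    exact Finset.card_eq_sum_ones FV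
  rw [h1]
  rw [Fintype.sum_sum_type, Fintype.sum_sum_type, Fintype.sum_sum_type,
    Fintype.sum_sum_type, Fintype.sum_prod_type]
  simp only [hFV, fv1_inl hg hn Es, fv1_vx hg hn Es, fv1_en hg hn Es,
    fv1_isoA hg hn Es, fv1_isoB hg hn Es, if_true, if_false, ite_true, ite_false]
  simp only [Finset.sum_const, Finset.card_univ, Fintype.card_fin, smul_eq_mul, mul_one,
    Finset.sum_const_zero, add_zero, zero_add]
  rw [u1E, Finset.card_filter, Fintype.sum_prod_type]
  simp only [mul_zero, zero_add, add_zero]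
  ring

lemma card_fv2_le (hg : 1 ≤ g) (hn : 2 ≤ n) (Es : Set (ISVoter G n g × ISVoter G n g)) (hcardX : Fintype.card X = g) (hcardE : Fintype.card G.edgeSet = n) :
    (finalVoters Es (ISScores G n g) (ISSeeds G n g) (ISMsg G n g) 2).card
      ≤ n ^ 2 * g ^ 2 := by
  classical
  set FV := finalVoters Es (ISScores G n g) (ISSeeds G n g) (ISMsg G n g) 2 with hFV
  have h1 : FV.card = ∑ v : ISVoter G n g, if v ∈ FV then 1 else 0 := by
    rw [Finset.sum_ite_mem, Finset.univ_inter]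
    exact Finset.card_eq_sum_ones FV
  rw [h1]
  rw [Fintype.sum_sum_type, Fintype.sum_sum_type, Fintype.sum_sum_type,
    Fintype.sum_sum_type, Fintype.sum_prod_type]
  simp only [hFV, fv2_inl hg hn Es, fv2_vx hg hn Es, fv2_en hg hn Es,
    fv2_isoA hg hn Es, fv2_isoB hg hn Es, if_true, if_false, ite_true, ite_false]
  simp only [Finset.sum_const_zero, add_zero]
  have b1 : (∑ i : Fin (n * g - g),
      if Reaches Es (Sum.inl ⟨0, hLpos hg hn⟩) (Sum.inl i) then 1 else 0) ≤ n * g - g := by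
    calc _ ≤ ∑ _i : Fin (n * g - g), 1 :=
          Finset.sum_le_sum (fun i _ => by split <;> omega)
    _ = n * g - g := by simp
  have b2 : (∑ x : X,
      if Reaches Es (Sum.inl ⟨0, hLpos hg hn⟩) (Sum.inr (Sum.inl x)) then 1 else 0) ≤ g := by
    calc _ ≤ ∑ _x : X, 1 := Finset.sum_le_sum (fun x _ => by split <;> omega)
    _ = g := by simp [hcardX]
  have b3 : (∑ z : G.edgeSet, ∑ j : Fin g,
      if Reaches Es (Sum.inl ⟨0, hLpos hg hn⟩) (Sum.inr (Sum.inr (Sum.inl (z, j))))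
        then 1 else 0) ≤ n * g := by
    calc _ ≤ ∑ _z : G.edgeSet, ∑ _j : Fin g, 1 :=
          Finset.sum_le_sum (fun z _ => Finset.sum_le_sum (fun j _ => by split <;> omega))
    _ = n * g := by simp [hcardE]
  have hng : 2 ≤ n * g := by nlinarith
  have h2 : 2 * (n * g) ≤ (n * g) * (n * g) := Nat.mul_le_mul_right _ hng
  have hgle : g ≤ n * g := by nlinarith
  have hsub : n * g - g + g = n * g := Nat.sub_add_cancel hgle
  have hpow : n * g * (n * g) = n ^ 2 * g ^ 2 := by ring
  nlinarith [b1, b2, b3, hsub, hpow, h2]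

lemma sup_erase0 (f : Fin 3 → ℕ) :
    (Finset.univ.erase (0 : Fin 3)).sup f = max (f 1) (f 2) := by
  have h : (Finset.univ.erase (0 : Fin 3)) = {1, 2} := by decide
  rw [h, Finset.sup_insert, Finset.sup_singleton]

lemma MoV_eq (hg : 1 ≤ g) (hn : 2 ≤ n) (Es : Set (ISVoter G n g × ISVoter G n g)) (hcardX : Fintype.card X = g) (hcardE : Fintype.card G.edgeSet = n) :
    MoV Es (ISScores G n g) (ISSeeds G n g) (ISMsg G n g)
      = ((u0L hg hn Es + u0X hg hn Es : ℕ) : ℤ) - ((u1E hg hn Es : ℕ) : ℤ) := by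
  rw [MoV, card_fv0 hg hn Es, sup_erase0, card_fv1 hg hn Es]
  have h2 : (finalVoters Es (ISScores G n g) (ISSeeds G n g) (ISMsg G n g) 2).card
      ≤ n ^ 2 * g ^ 2 + u1E hg hn Es :=
    le_trans (card_fv2_le hg hn Es hcardX hcardE) (Nat.le_add_right _ _)
  rw [max_eq_left h2]
  push_cast
  ring

end Cards


section Baseline

lemma sym2_rep (z : Sym2 X) : ∃ a b, z = s(a, b) := by
  obtain ⟨⟨a, b⟩, h⟩ := Quot.exists_rep z
  exact ⟨a, b, h.symm⟩

lemma full_line (hg : 1 ≤ g) (hn : 2 ≤ n) (i : Fin (n * g - g)) :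
    Reaches (ISEdges G n g) (Sum.inl ⟨0, hLpos hg hn⟩) (Sum.inl i) :=
  reaches_line_all _ (fun i j h => Or.inl ⟨i, j, h, rfl, rfl⟩) _ i

lemma full_vx (hg : 1 ≤ g) (hn : 2 ≤ n) (x : X) :
    Reaches (ISEdges G n g) (Sum.inl ⟨0, hLpos hg hn⟩) (Sum.inr (Sum.inl x)) := by
  have hL : 0 < n * g - g := hLpos hg hn
  refine Relation.ReflTransGen.tail (full_line hg hn ⟨n * g - g - 1, by omega⟩) ?_
  exact Or.inr (Or.inl ⟨⟨n * g - g - 1, by omega⟩, x, by simp; omega, rfl, rfl⟩)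

lemma full_en (hg : 1 ≤ g) (hn : 2 ≤ n) (z : G.edgeSet) (j : Fin g) :
    Reaches (ISEdges G n g) (Sum.inl ⟨0, hLpos hg hn⟩) (Sum.inr (Sum.inr (Sum.inl (z, j)))) := by
  obtain ⟨a, b, hab⟩ := sym2_rep (z : Sym2 X)
  have ha : a ∈ (z : Sym2 X) := by rw [hab]; exact Sym2.mem_mk_left a b
  have h0 : Reaches (ISEdges G n g) (Sum.inl ⟨0, hLpos hg hn⟩)
      (Sum.inr (Sum.inr (Sum.inl (z, ⟨0, hg⟩)))) := by
    refine Relation.ReflTransGen.tail (full_vx hg hn a) ?_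
    exact Or.inr (Or.inr (Or.inl ⟨a, z, ⟨0, hg⟩, ha, rfl, rfl, rfl⟩))
  exact reaches_en_all _ (fun z i j h => Or.inr (Or.inr (Or.inr ⟨z, i, j, h, rfl, rfl⟩)))
    (hLpos hg hn) hg z h0 j

lemma MoV_full (hg : 1 ≤ g) (hn : 2 ≤ n) (hcardX : Fintype.card X = g)
    (hcardE : Fintype.card G.edgeSet = n) :
    MoV (ISEdges G n g) (ISScores G n g) (ISSeeds G n g) (ISMsg G n g) = 0 := by
  rw [MoV_eq hg hn _ hcardX hcardE]
  have h0 : u0L hg hn (ISEdges G n g) = 0 :=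
    Finset.card_eq_zero.mpr (Finset.filter_eq_empty_iff.mpr
      (fun i _ => not_not_intro (full_line hg hn i)))
  have h1 : u0X hg hn (ISEdges G n g) = 0 :=
    Finset.card_eq_zero.mpr (Finset.filter_eq_empty_iff.mpr
      (fun x _ => not_not_intro (full_vx hg hn x)))
  have h2 : u1E hg hn (ISEdges G n g) = 0 :=
    Finset.card_eq_zero.mpr (Finset.filter_eq_empty_iff.mpr
      (fun p _ => not_not_intro (full_en hg hn p.1 p.2)))
  rw [h0, h1, h2]
  simp

end Baseline

end ISAux

/-- The maximum of ΔMoV⁻(E') over all E' ⊆ E equals α(G), the maximum cardinality of an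
independent set of `G`. -/
theorem max_deltaMoV_removal_eq_indepNum
    (hg : 1 ≤ g) (hn : 2 ≤ n) (hcardX : Fintype.card X = g)
    (hcardE : Fintype.card G.edgeSet = n) :
    IsGreatest
      { d : ℤ | ∃ E' : Set (ISVoter G n g × ISVoter G n g), E' ⊆ ISEdges G n g ∧
          d = MoV (ISEdges G n g \ E') (ISScores G n g) (ISSeeds G n g) (ISMsg G n g) -
                MoV (ISEdges G n g) (ISScores G n g) (ISSeeds G n g) (ISMsg G n g) }
      ((((Finset.univ.powerset.filter fun s : Finset X =>
            ∀ a ∈ s, ∀ b ∈ s, ¬G.Adj a b).sup Finset.card : ℕ)) : ℤ) := by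
  classical
  have hL : 0 < n * g - g := ISAux.hLpos hg hn
  constructor
  · -- membership: the value α is attained
    obtain ⟨I, hImem, hIcard⟩ := Finset.exists_mem_eq_sup
      (Finset.univ.powerset.filter fun s : Finset X => ∀ a ∈ s, ∀ b ∈ s, ¬G.Adj a b)
      ⟨∅, by simp⟩ Finset.card
    have hIindep : ∀ a ∈ I, ∀ b ∈ I, ¬G.Adj a b := (Finset.mem_filter.mp hImem).2
    refine ⟨{p | ∃ x ∈ I, p = (Sum.inl ⟨n * g - g - 1, by omega⟩, Sum.inr (Sum.inl x))},
      ?_, ?_⟩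
    · rintro p ⟨x, hx, rfl⟩
      exact Or.inr (Or.inl ⟨⟨n * g - g - 1, by omega⟩, x,
        (by show n * g - g - 1 + 1 = n * g - g; omega), rfl, rfl⟩)
    · set E' : Set (ISVoter G n g × ISVoter G n g) :=
        {p | ∃ x ∈ I, p = (Sum.inl ⟨n * g - g - 1, by omega⟩, Sum.inr (Sum.inl x))} with hE'
      set Es : Set (ISVoter G n g × ISVoter G n g) := ISEdges G n g \ E' with hEs
      have hsub : Es ⊆ ISEdges G n g := Set.diff_subset
      have c1 : ∀ i : Fin (n * g - g), Reaches Es (Sum.inl ⟨0, hL⟩) (Sum.inl i) := by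
        refine ISAux.reaches_line_all Es (fun i j h => ⟨Or.inl ⟨i, j, h, rfl, rfl⟩, ?_⟩) hL
        rintro ⟨x, hx, heq⟩
        simp at heq
      have c2 : ∀ x : X, x ∉ I →
          Reaches Es (Sum.inl ⟨0, hL⟩) (Sum.inr (Sum.inl x)) := by
        intro x hxn
        refine Relation.ReflTransGen.tail (c1 ⟨n * g - g - 1, by omega⟩)
          ⟨Or.inr (Or.inl ⟨⟨n * g - g - 1, by omega⟩, x,
            (by show n * g - g - 1 + 1 = n * g - g; omega), rfl, rfl⟩), ?_⟩
        rintro ⟨y, hy, heq⟩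
        simp only [Prod.mk.injEq, Sum.inr.injEq, Sum.inl.injEq] at heq
        exact hxn (by rw [heq.2]; exact hy)
      have c3 : ∀ x : X, x ∈ I →
          ¬ Reaches Es (Sum.inl ⟨0, hL⟩) (Sum.inr (Sum.inl x)) := by
        intro x hxI hr
        obtain ⟨i, hi1, -, hedge⟩ := ISAux.reaches_vx_struct Es hsub hL hr
        have hieq : i = ⟨n * g - g - 1, by omega⟩ := Fin.ext (by
          show (i : ℕ) = n * g - g - 1; omega)
        exact hedge.2 ⟨x, hxI, by rw [hieq]⟩
      have c4 : ∀ (z : G.edgeSet) (j : Fin g),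
          Reaches Es (Sum.inl ⟨0, hL⟩) (Sum.inr (Sum.inr (Sum.inl (z, j)))) := by
        intro z j
        obtain ⟨a, b, hab⟩ := ISAux.sym2_rep (z : Sym2 X)
        have hadj : G.Adj a b := G.mem_edgeSet.mp (hab ▸ z.2)
        obtain ⟨x, hxz, hxn⟩ : ∃ x : X, x ∈ (z : Sym2 X) ∧ x ∉ I := by
          by_cases haI : a ∈ I
          · exact ⟨b, by rw [hab]; exact Sym2.mem_mk_right a b,
              fun hbI => hIindep a haI b hbI hadj⟩
          · exact ⟨a, by rw [hab]; exact Sym2.mem_mk_left a b, haI⟩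
        have h0 : Reaches Es (Sum.inl ⟨0, hL⟩)
            (Sum.inr (Sum.inr (Sum.inl (z, ⟨0, hg⟩)))) := by
          refine Relation.ReflTransGen.tail (c2 x hxn)
            ⟨Or.inr (Or.inr (Or.inl ⟨x, z, ⟨0, hg⟩, hxz, rfl, rfl, rfl⟩)), ?_⟩
          rintro ⟨y, hy, heq⟩
          simp at heq
        refine ISAux.reaches_en_all Es (fun z i j h =>
          ⟨Or.inr (Or.inr (Or.inr ⟨z, i, j, h, rfl, rfl⟩)), ?_⟩) hL hg z h0 j
        rintro ⟨y, hy, heq⟩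
        simp at heq
      have hu0L : ISAux.u0L hg hn Es = 0 :=
        Finset.card_eq_zero.mpr (Finset.filter_eq_empty_iff.mpr
          (fun i _ => not_not_intro (c1 i)))
      have hu0X : ISAux.u0X hg hn Es = I.card := by
        rw [ISAux.u0X]
        congr 1
        ext x
        simp only [Finset.mem_filter, Finset.mem_univ, true_and]
        exact ⟨fun h => by_contra (fun hxn => h (c2 x hxn)), fun h => c3 x h⟩
      have hu1 : ISAux.u1E hg hn Es = 0 :=
        Finset.card_eq_zero.mpr (Finset.filter_eq_empty_iff.mpr
          (fun p _ => not_not_intro (c4 p.1 p.2)))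
      rw [ISAux.MoV_full hg hn hcardX hcardE, ISAux.MoV_eq hg hn _ hcardX hcardE,
        hu0L, hu0X, hu1, hIcard]
      simp
  · -- upper bound
    rintro d ⟨E', hE'sub, rfl⟩
    have hsub : ISEdges G n g \ E' ⊆ ISEdges G n g := Set.diff_subset
    set Es : Set (ISVoter G n g × ISVoter G n g) := ISEdges G n g \ E' with hEs
    rw [ISAux.MoV_full hg hn hcardX hcardE, ISAux.MoV_eq hg hn _ hcardX hcardE, sub_zero]
    by_cases hlast : Reaches Es (Sum.inl ⟨0, hL⟩) (Sum.inl ⟨n * g - g - 1, by omega⟩)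
    · -- the last line node is influenced
      have hu0L : ISAux.u0L hg hn Es = 0 :=
        Finset.card_eq_zero.mpr (Finset.filter_eq_empty_iff.mpr
          (fun i _ => not_not_intro
            (ISAux.reaches_line_prefix Es hsub hL hlast _ rfl i (by
              show (i : ℕ) ≤ n * g - g - 1; omega))))
      by_cases hbad : ∃ z : G.edgeSet, ∀ x ∈ (z : Sym2 X),
          ¬ Reaches Es (Sum.inl ⟨0, hL⟩) (Sum.inr (Sum.inl x))
      · -- some edge has both endpoints uninfluenced; its whole line is uninfluenced
        obtain ⟨z, hz⟩ := hbad
        have hen : ∀ j : Fin g,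
            ¬ Reaches Es (Sum.inl ⟨0, hL⟩) (Sum.inr (Sum.inr (Sum.inl (z, j)))) := by
          intro j hr
          obtain ⟨x, hx1, hx2⟩ := ISAux.reaches_en_struct Es hsub hL hr z j rfl
          exact hz x hx1 hx2
        have hu1 : g ≤ ISAux.u1E hg hn Es := by
          rw [ISAux.u1E]
          have hcg : ({z} ×ˢ (Finset.univ : Finset (Fin g))).card = g := by simp
          refine le_trans (le_of_eq hcg.symm) (Finset.card_le_card ?_)
          rintro ⟨z', j⟩ hm
          simp only [Finset.mem_product, Finset.mem_singleton] at hm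
          simp only [Finset.mem_filter, Finset.mem_univ, true_and]
          rw [hm.1]
          exact hen j
        have hu0X : ISAux.u0X hg hn Es ≤ g :=
          le_trans (Finset.card_filter_le _ _) (by simp [hcardX])
        omega
      · -- otherwise the uninfluenced v_x form an independent set
        push_neg at hbad
        have hSind : ∀ a ∈ (Finset.univ.filter fun x : X =>
            ¬ Reaches Es (Sum.inl ⟨0, ISAux.hLpos hg hn⟩) (Sum.inr (Sum.inl x))),
            ∀ b ∈ (Finset.univ.filter fun x : X =>
            ¬ Reaches Es (Sum.inl ⟨0, ISAux.hLpos hg hn⟩) (Sum.inr (Sum.inl x))),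
            ¬ G.Adj a b := by
          intro a ha b hb hadj
          obtain ⟨x, hx1, hx2⟩ := hbad ⟨s(a, b), G.mem_edgeSet.mpr hadj⟩
          rcases Sym2.mem_iff.mp hx1 with rfl | rfl
          · exact (Finset.mem_filter.mp ha).2 hx2
          · exact (Finset.mem_filter.mp hb).2 hx2
        have hSle : ISAux.u0X hg hn Es ≤ (Finset.univ.powerset.filter
            fun s : Finset X => ∀ a ∈ s, ∀ b ∈ s, ¬G.Adj a b).sup Finset.card := by
          rw [ISAux.u0X]
          exact Finset.le_sup (Finset.mem_filter.mpr
            ⟨Finset.mem_powerset.mpr (Finset.subset_univ _), hSind⟩)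
        omega
    · -- the last line node is uninfluenced: every v_x and edge line is uninfluenced
      have hvx : ∀ x : X, ¬ Reaches Es (Sum.inl ⟨0, hL⟩) (Sum.inr (Sum.inl x)) := by
        intro x hr
        obtain ⟨i, hi1, hreach, -⟩ := ISAux.reaches_vx_struct Es hsub hL hr
        have hieq : i = ⟨n * g - g - 1, by omega⟩ := Fin.ext (by
          show (i : ℕ) = n * g - g - 1; omega)
        exact hlast (hieq ▸ hreach)
      have hen : ∀ (z : G.edgeSet) (j : Fin g),
          ¬ Reaches Es (Sum.inl ⟨0, hL⟩) (Sum.inr (Sum.inr (Sum.inl (z, j)))) := by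
        intro z j hr
        obtain ⟨x, -, hx⟩ := ISAux.reaches_en_struct Es hsub hL hr z j rfl
        exact hvx x hx
      have hu1 : ISAux.u1E hg hn Es = n * g := by
        rw [ISAux.u1E]
        have hft : (Finset.univ.filter fun p : G.edgeSet × Fin g =>
            ¬ Reaches Es (Sum.inl ⟨0, ISAux.hLpos hg hn⟩) (Sum.inr (Sum.inr (Sum.inl p))))
            = Finset.univ := Finset.filter_true_of_mem (fun p _ => hen p.1 p.2)
        rw [hft]
        simp [Finset.card_univ, hcardE]
      have hu0L : ISAux.u0L hg hn Es ≤ n * g - g :=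
        le_trans (Finset.card_filter_le _ _) (by simp)
      have hu0X : ISAux.u0X hg hn Es ≤ g :=
        le_trans (Finset.card_filter_le _ _) (by simp [hcardX])
      have hgng : g ≤ n * g := by nlinarith
      obtain ⟨K, hK⟩ : ∃ K, K = n * g := ⟨_, rfl⟩
      rw [← hK] at hu1 hu0L hgng
      omega

end IndepSet
end

section
/- Let N be a set of n elements and X a collection of g subsets of N with n > g ≥ h ≥ 1 and n² − h − 1 ≥ 1. Construct the election instance with two candidates c_0, c_1: a node v_1 with score vector ⟨1,0⟩, a seed sending the message (+1 on c_0, −1 on c_1); a node v_2 with score vector ⟨1,0⟩, a seed sending the message (−1 on c_0); an edge from v_1 to v_2; a directed line L_1 of n²−h−1 nodes with score vector ⟨1,0⟩, whose first node is a seed sending the message (+1 on c_1); an edge from v_2 to the first node of L_1; for each x ∈ X a node v_x with score vector ⟨1,0⟩ and an edge from the last node of L_1 to v_x; for each z ∈ N a directed line L_z of n nodes with score vector ⟨0,1⟩, with an edge from v_x to the first node of L_z whenever z ∈ x; and g−h+1 isolated nodes with score vector ⟨0,1⟩. All edges are deterministic except an additional edge from v_1 to the first node of L_1 which has probability 1/2: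 let H_1 be the live graph containing this edge and H_2 the live graph without it. Then there exists E' ⊆ E with (ΔMoV^-(E',H_1) + ΔMoV^-(E',H_2))/2 > 0 if and only if there exists X* ⊆ X with |X*| ≤ h and ⋃_{x∈X*} x = N. -/
open scoped Classical

section EdgeRemovalSetCover

variable (α : Type*) (n g h : ℕ)

/-- Voters: v₁ (`false`) and v₂ (`true`), the line L₁ of n²−h−1 nodes, a node `v_x` for
each set of the collection, a line L_z of n nodes for each element `z`, and g−h+1 isolated
nodes. -/
abbrev ERVoter :=
  Bool ⊕ (Fin (n ^ 2 - h - 1) ⊕ (Fin g ⊕ ((α × Fin n) ⊕ Fin (g - h + 1))))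

variable {α n g h}

/-- The live graph H₂ (the stochastic edge from v₁ to the first node of L₁ is absent):
an edge from v₁ to v₂, an edge from v₂ to the first node of L₁, L₁ a directed line, an edge
from the last node of L₁ to each `v_x`, an edge from `v_x` to the first node of L_z whenever
`z ∈ x`, and each L_z a directed line. -/
def EREdgesH2 (X : Fin g → Finset α) : Set (ERVoter α n g h × ERVoter α n g h) :=
  { p | (p.1 = Sum.inl false ∧ p.2 = Sum.inl true) ∨
        (∃ j : Fin (n ^ 2 - h - 1), (j : ℕ) = 0 ∧
          p.1 = Sum.inl true ∧ p.2 = Sum.inr (Sum.inl j)) ∨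
        (∃ i j : Fin (n ^ 2 - h - 1), (i : ℕ) + 1 = (j : ℕ) ∧
          p.1 = Sum.inr (Sum.inl i) ∧ p.2 = Sum.inr (Sum.inl j)) ∨
        (∃ (i : Fin (n ^ 2 - h - 1)) (x : Fin g), (i : ℕ) + 1 = n ^ 2 - h - 1 ∧
          p.1 = Sum.inr (Sum.inl i) ∧ p.2 = Sum.inr (Sum.inr (Sum.inl x))) ∨
        (∃ (x : Fin g) (z : α) (j : Fin n), z ∈ X x ∧ (j : ℕ) = 0 ∧
          p.1 = Sum.inr (Sum.inr (Sum.inl x)) ∧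
          p.2 = Sum.inr (Sum.inr (Sum.inr (Sum.inl (z, j))))) ∨
        (∃ (z : α) (i j : Fin n), (i : ℕ) + 1 = (j : ℕ) ∧
          p.1 = Sum.inr (Sum.inr (Sum.inr (Sum.inl (z, i)))) ∧
          p.2 = Sum.inr (Sum.inr (Sum.inr (Sum.inl (z, j))))) }

/-- The live graph H₁: H₂ together with the stochastic edge from v₁ to the first node
of L₁. -/
def EREdgesH1 (X : Fin g → Finset α) : Set (ERVoter α n g h × ERVoter α n g h) :=
  EREdgesH2 X ∪
    { p | ∃ j : Fin (n ^ 2 - h - 1), (j : ℕ) = 0 ∧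
        p.1 = Sum.inl false ∧ p.2 = Sum.inr (Sum.inl j) }

/-- Scores: v₁, v₂, L₁ and the `v_x` have ⟨1,0⟩; the L_z and the isolated nodes have
⟨0,1⟩. -/
def ERScores : ERVoter α n g h → Fin 2 → ℕ
  | Sum.inl _ => ![1, 0]
  | Sum.inr (Sum.inl _) => ![1, 0]
  | Sum.inr (Sum.inr (Sum.inl _)) => ![1, 0]
  | Sum.inr (Sum.inr (Sum.inr _)) => ![0, 1]

/-- Seeds: v₁, v₂ and the first node of L₁. -/
def ERSeeds : Set (ERVoter α n g h) :=
  { v | v = Sum.inl false ∨ v = Sum.inl true ∨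
    ∃ j : Fin (n ^ 2 - h - 1), (j : ℕ) = 0 ∧ v = Sum.inr (Sum.inl j) }

/-- Messages: v₁ sends (+1 on c₀, −1 on c₁); v₂ sends (−1 on c₀); the first node of L₁
sends (+1 on c₁). -/
def ERMsg : ERVoter α n g h → Fin 2 → ℤ
  | Sum.inl false => ![1, -1]
  | Sum.inl true => ![-1, 0]
  | Sum.inr (Sum.inl _) => ![0, 1]
  | _ => ![0, 0]

/-! ### Auxiliary development -/

namespace ERAux
set_option linter.unusedSectionVars false
set_option linter.unreachableTactic false
set_option linter.unusedTactic false

variable {α : Type*} {n g h : ℕ}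

/-- v₁ -/
def vA : ERVoter α n g h := Sum.inl false
/-- v₂ -/
def vB : ERVoter α n g h := Sum.inl true
/-- node of L₁ -/
def ln (i : Fin (n ^ 2 - h - 1)) : ERVoter α n g h := Sum.inr (Sum.inl i)
/-- v_x -/
def sx (x : Fin g) : ERVoter α n g h := Sum.inr (Sum.inr (Sum.inl x))
/-- node of L_z -/
def zn (z : α) (j : Fin n) : ERVoter α n g h := Sum.inr (Sum.inr (Sum.inr (Sum.inl (z, j))))
/-- isolated node -/
def iso (k : Fin (g - h + 1)) : ERVoter α n g h := Sum.inr (Sum.inr (Sum.inr (Sum.inr k)))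

lemma erase_zero : (Finset.univ.erase (0 : Fin 2)) = {1} := by decide

lemma MoV_two {V : Type*} [Fintype V] (F : Set (V × V)) (π : V → Fin 2 → ℕ)
    (S : Set V) (m : V → Fin 2 → ℤ) :
    MoV F π S m = ((finalVoters F π S m 0).card : ℤ) - ((finalVoters F π S m 1).card : ℤ) := by
  rw [MoV, erase_zero, Finset.sup_singleton]

variable [Fintype α]

lemma eps_half : eps (ERScores : ERVoter α n g h → Fin 2 → ℕ) = 1/2 := by
  have hsup : (Finset.univ.sup fun v : ERVoter α n g h =>
      Finset.univ.sup fun i => ERScores v i) = 1 := by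
    apply le_antisymm
    · apply Finset.sup_le
      intro v _
      apply Finset.sup_le
      intro i _
      fin_cases i <;>
        rcases v with (_|_) | (i | x | ((z | k))) <;>
          simp [ERScores]
    · have h1 : (1 : ℕ) ≤ Finset.univ.sup fun i => ERScores (vA : ERVoter α n g h) i := by
        have := Finset.le_sup (f := fun i => ERScores (vA : ERVoter α n g h) i)
          (Finset.mem_univ (0 : Fin 2))
        simpa [ERScores, vA] using this
      exact h1.trans (Finset.le_sup (f := fun v => Finset.univ.sup fun i => ERScores v i)
        (Finset.mem_univ (vA : ERVoter α n g h)))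
  rw [eps, hsup]
  norm_num

lemma mem_seeds_iff (hL : 0 < n ^ 2 - h - 1) (s : ERVoter α n g h) :
    s ∈ (ERSeeds : Set (ERVoter α n g h)) ↔
      s = vA ∨ s = vB ∨ s = ln ⟨0, hL⟩ := by
  unfold ERSeeds vA vB ln
  simp only [Set.mem_setOf_eq]
  constructor
  · rintro (rfl | rfl | ⟨j, hj, rfl⟩)
    · exact Or.inl rfl
    · exact Or.inr (Or.inl rfl)
    · refine Or.inr (Or.inr ?_)
      congr 2
      exact Fin.ext hj
  · rintro (rfl | rfl | rfl)
    · exact Or.inl rfl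
    · exact Or.inr (Or.inl rfl)
    · exact Or.inr (Or.inr ⟨⟨0, hL⟩, rfl, rfl⟩)

lemma vA_ne_vB : (vA : ERVoter α n g h) ≠ vB := by simp [vA, vB]
lemma vA_ne_ln (i : Fin (n ^ 2 - h - 1)) : (vA : ERVoter α n g h) ≠ ln i := by simp [vA, ln]
lemma vB_ne_ln (i : Fin (n ^ 2 - h - 1)) : (vB : ERVoter α n g h) ≠ ln i := by simp [vB, ln]

lemma score_eq (hL : 0 < n ^ 2 - h - 1) (F : Set (ERVoter α n g h × ERVoter α n g h))
    (v : ERVoter α n g h) (i : Fin 2) :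
    finalScore F ERScores ERSeeds ERMsg v i
      = (1/2) * (ERScores v i : ℚ)
        + ((if Reaches F vA v then ((ERMsg (vA : ERVoter α n g h) i : ℤ) : ℚ) else 0)
        + ((if Reaches F vB v then ((ERMsg (vB : ERVoter α n g h) i : ℤ) : ℚ) else 0)
        + (if Reaches F (ln ⟨0, hL⟩) v then ((ERMsg (ln ⟨0, hL⟩ : ERVoter α n g h) i : ℤ) : ℚ)
            else 0))) := by
  have hfil : Finset.univ.filter (fun s => s ∈ (ERSeeds : Set (ERVoter α n g h)) ∧ Reaches F s v)
      = ({vA, vB, ln ⟨0, hL⟩} : Finset (ERVoter α n g h)).filter (fun s => Reaches F s v) := by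
    ext s
    simp only [Finset.mem_filter, Finset.mem_univ, true_and, Finset.mem_insert,
      Finset.mem_singleton, mem_seeds_iff hL]
  rw [finalScore, eps_half, hfil, Finset.sum_filter,
    Finset.sum_insert (by simp [vA_ne_vB, vA_ne_ln]),
    Finset.sum_insert (by simp [vB_ne_ln]), Finset.sum_singleton]
  norm_num

lemma score0 (hL : 0 < n ^ 2 - h - 1) (F : Set (ERVoter α n g h × ERVoter α n g h))
    (v : ERVoter α n g h) :
    finalScore F ERScores ERSeeds ERMsg v 0
      = (1/2) * (ERScores v 0 : ℚ)
        + ((if Reaches F vA v then 1 else 0) + ((if Reaches F vB v then (-1) else 0) + 0)) := by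
  rw [score_eq hL]
  simp [ERMsg, vA, vB, ln]
  split_ifs <;> simp_all

lemma score1 (hL : 0 < n ^ 2 - h - 1) (F : Set (ERVoter α n g h × ERVoter α n g h))
    (v : ERVoter α n g h) :
    finalScore F ERScores ERSeeds ERMsg v 1
      = (1/2) * (ERScores v 1 : ℚ)
        + ((if Reaches F vA v then (-1) else 0)
          + (0 + (if Reaches F (ln ⟨0, hL⟩) v then 1 else 0))) := by
  rw [score_eq hL]
  simp [ERMsg, vA, vB, ln]
  split_ifs <;> simp_all

section Votes
variable (hL : 0 < n ^ 2 - h - 1) (F : Set (ERVoter α n g h × ERVoter α n g h))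
  (v : ERVoter α n g h)

/-- `v` votes for candidate `c`. -/
def Votes (c : Fin 2) : Prop :=
  ∀ j, j ≠ c → finalScore F ERScores ERSeeds ERMsg v j < finalScore F ERScores ERSeeds ERMsg v c

lemma votes0_top (hπ0 : ERScores v 0 = 1) (hπ1 : ERScores v 1 = 0)
    (hc : (Reaches F vA v ∧ ¬ Reaches F vB v)
      ∨ (Reaches F vA v ∧ ¬ Reaches F (ln ⟨0, hL⟩) v)
      ∨ (¬ Reaches F vB v ∧ ¬ Reaches F (ln ⟨0, hL⟩) v)
      ∨ (Reaches F vA v ∧ Reaches F vB v ∧ Reaches F (ln ⟨0, hL⟩) v)) :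
    Votes F v 0 := by
  intro j hj
  have hj1 : j = 1 := by fin_cases j <;> simp_all
  subst hj1
  rw [score0 hL, score1 hL, hπ0, hπ1]
  by_cases hA : Reaches F vA v <;> by_cases hB : Reaches F vB v <;>
    by_cases hC : Reaches F (ln ⟨0, hL⟩) v <;>
    simp only [hA, hB, hC, if_true, if_false, ite_true, ite_false] <;>
    first
      | (norm_num; done)
      | (exfalso; revert hc; simp [hA, hB, hC])

lemma votes1_top (hπ0 : ERScores v 0 = 1) (hπ1 : ERScores v 1 = 0)
    (hc : (¬ Reaches F vA v ∧ Reaches F (ln ⟨0, hL⟩) v)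
      ∨ (¬ Reaches F vA v ∧ Reaches F vB v)) :
    Votes F v 1 := by
  intro j hj
  have hj1 : j = 0 := by fin_cases j <;> simp_all
  subst hj1
  rw [score0 hL, score1 hL, hπ0, hπ1]
  by_cases hA : Reaches F vA v <;> by_cases hB : Reaches F vB v <;>
    by_cases hC : Reaches F (ln ⟨0, hL⟩) v <;>
    simp only [hA, hB, hC, if_true, if_false, ite_true, ite_false] <;>
    first
      | (norm_num; done)
      | (exfalso; revert hc; simp [hA, hB, hC])

lemma votes0_bot (hπ0 : ERScores v 0 = 0) (hπ1 : ERScores v 1 = 1)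
    (hc : (Reaches F vA v ∧ ¬ Reaches F vB v)
      ∨ (Reaches F vA v ∧ ¬ Reaches F (ln ⟨0, hL⟩) v)) :
    Votes F v 0 := by
  intro j hj
  have hj1 : j = 1 := by fin_cases j <;> simp_all
  subst hj1
  rw [score0 hL, score1 hL, hπ0, hπ1]
  by_cases hA : Reaches F vA v <;> by_cases hB : Reaches F vB v <;>
    by_cases hC : Reaches F (ln ⟨0, hL⟩) v <;>
    simp only [hA, hB, hC, if_true, if_false, ite_true, ite_false] <;>
    first
      | (norm_num; done)
      | (exfalso; revert hc; simp [hA, hB, hC])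

lemma votes1_bot (hπ0 : ERScores v 0 = 0) (hπ1 : ERScores v 1 = 1)
    (hc : (¬ Reaches F vA v)
      ∨ (Reaches F vB v ∧ Reaches F (ln ⟨0, hL⟩) v)) :
    Votes F v 1 := by
  intro j hj
  have hj1 : j = 0 := by fin_cases j <;> simp_all
  subst hj1
  rw [score0 hL, score1 hL, hπ0, hπ1]
  by_cases hA : Reaches F vA v <;> by_cases hB : Reaches F vB v <;>
    by_cases hC : Reaches F (ln ⟨0, hL⟩) v <;>
    simp only [hA, hB, hC, if_true, if_false, ite_true, ite_false] <;>
    first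
      | (norm_num; done)
      | (exfalso; revert hc; simp [hA, hB, hC])

end Votes

lemma mem_finalVoters_iff (F : Set (ERVoter α n g h × ERVoter α n g h))
    (v : ERVoter α n g h) (c : Fin 2) :
    v ∈ finalVoters F ERScores ERSeeds ERMsg c ↔ Votes F v c := by
  simp [finalVoters, Votes]

lemma finalVoters_eq (F : Set (ERVoter α n g h × ERVoter α n g h))
    (w : ERVoter α n g h → Fin 2) (hw : ∀ v, Votes F v (w v)) (c : Fin 2) :
    finalVoters F ERScores ERSeeds ERMsg c = Finset.univ.filter (fun v => w v = c) := by
  ext v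
  rw [mem_finalVoters_iff]
  simp only [Finset.mem_filter, Finset.mem_univ, true_and]
  constructor
  · intro hv
    by_contra hne
    have h1 := hv (w v) hne
    have h2 := hw v c (fun e => hne e.symm)
    exact absurd h2 (not_lt.2 h1.le)
  · intro hc
    subst hc
    exact hw v

lemma MoV_eq_sum (F : Set (ERVoter α n g h × ERVoter α n g h))
    (w : ERVoter α n g h → Fin 2) (hw : ∀ v, Votes F v (w v)) :
    MoV F ERScores ERSeeds ERMsg = ∑ v : ERVoter α n g h, (if w v = 0 then (1 : ℤ) else -1) := by
  have hfc : (Finset.univ.filter (fun v : ERVoter α n g h => ¬ w v = 0))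
      = Finset.univ.filter (fun v => w v = 1) := by
    apply Finset.filter_congr
    intro v _
    have : ∀ c : Fin 2, (¬ c = 0) ↔ c = 1 := by decide
    simp [this]
  rw [MoV_two, finalVoters_eq F w hw 0, finalVoters_eq F w hw 1, Finset.sum_ite,
    Finset.sum_const, Finset.sum_const, hfc]
  simp [nsmul_eq_mul]
  ring

section Edges
variable {X : Fin g → Finset α} {a b : ERVoter α n g h}

lemma H2_subset_H1 : (EREdgesH2 X : Set (ERVoter α n g h × ERVoter α n g h)) ⊆ EREdgesH1 X :=
  Set.subset_union_left

lemma edge_from_vA_H2 (hb : ((vA : ERVoter α n g h), b) ∈ EREdgesH2 X) : b = vB := by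
  rcases hb with ⟨h1, h2⟩ | ⟨j, hj, h1, h2⟩ | ⟨i, j, hij, h1, h2⟩ | ⟨i, x, hi, h1, h2⟩
    | ⟨x, z, j, hz, hj, h1, h2⟩ | ⟨z, i, j, hij, h1, h2⟩ <;> simp_all [vA, vB]

lemma edge_from_vA (hb : ((vA : ERVoter α n g h), b) ∈ EREdgesH1 X) :
    b = vB ∨ ∃ j : Fin (n ^ 2 - h - 1), (j : ℕ) = 0 ∧ b = ln j := by
  rcases hb with hb | ⟨j, hj, h1, h2⟩
  · exact Or.inl (edge_from_vA_H2 hb)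
  · exact Or.inr ⟨j, hj, h2⟩

lemma edge_from_vB (hb : ((vB : ERVoter α n g h), b) ∈ EREdgesH1 X) :
    ∃ j : Fin (n ^ 2 - h - 1), (j : ℕ) = 0 ∧ b = ln j := by
  rcases hb with (⟨h1, h2⟩ | ⟨j, hj, h1, h2⟩ | ⟨i, j, hij, h1, h2⟩ | ⟨i, x, hi, h1, h2⟩
    | ⟨x, z, j, hz, hj, h1, h2⟩ | ⟨z, i, j, hij, h1, h2⟩) | ⟨j, hj, h1, h2⟩ <;>
    first
      | (exact ⟨j, hj, h2⟩)
      | simp_all [vA, vB, ln]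

lemma edge_from_ln {i : Fin (n ^ 2 - h - 1)} (hb : (ln i, b) ∈ EREdgesH1 X) :
    (∃ j : Fin (n ^ 2 - h - 1), (i : ℕ) + 1 = (j : ℕ) ∧ b = ln j)
      ∨ ((i : ℕ) + 1 = n ^ 2 - h - 1 ∧ ∃ x, b = sx x) := by
  rcases hb with (⟨h1, h2⟩ | ⟨j, hj, h1, h2⟩ | ⟨i', j, hij, h1, h2⟩ | ⟨i', x, hi, h1, h2⟩
    | ⟨x, z, j, hz, hj, h1, h2⟩ | ⟨z, i', j, hij, h1, h2⟩) | ⟨j, hj, h1, h2⟩ <;>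
    simp_all [vA, vB, ln, sx]
  all_goals
    first
      | exact Or.inl ⟨j, hij, h2⟩
      | exact Or.inr ⟨hi, x, h2⟩

lemma edge_from_sx {x : Fin g} (hb : (sx x, b) ∈ EREdgesH1 X) :
    ∃ z, z ∈ X x ∧ ∃ j : Fin n, (j : ℕ) = 0 ∧ b = zn z j := by
  rcases hb with (⟨h1, h2⟩ | ⟨j, hj, h1, h2⟩ | ⟨i', j, hij, h1, h2⟩ | ⟨i', x', hi, h1, h2⟩
    | ⟨x', z, j, hz, hj, h1, h2⟩ | ⟨z, i', j, hij, h1, h2⟩) | ⟨j, hj, h1, h2⟩ <;>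
    simp_all [vA, vB, ln, sx, zn]
  all_goals exact ⟨z, hz, j, hj, h2⟩

lemma edge_from_zn {z : α} {i : Fin n} (hb : (zn z i, b) ∈ EREdgesH1 X) :
    ∃ j : Fin n, (i : ℕ) + 1 = (j : ℕ) ∧ b = zn z j := by
  rcases hb with (⟨h1, h2⟩ | ⟨j, hj, h1, h2⟩ | ⟨i', j, hij, h1, h2⟩ | ⟨i', x', hi, h1, h2⟩
    | ⟨x', z', j, hz, hj, h1, h2⟩ | ⟨z', i', j, hij, h1, h2⟩) | ⟨j, hj, h1, h2⟩ <;>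
    simp_all [vA, vB, ln, sx, zn]
  all_goals
    (obtain ⟨hz, hi⟩ := h1
     subst hz hi
     exact ⟨j, hij, h2⟩)

lemma edge_from_iso {k : Fin (g - h + 1)} (hb : (iso k, b) ∈ EREdgesH1 X) : False := by
  rcases hb with (⟨h1, h2⟩ | ⟨j, hj, h1, h2⟩ | ⟨i', j, hij, h1, h2⟩ | ⟨i', x', hi, h1, h2⟩
    | ⟨x', z', j, hz, hj, h1, h2⟩ | ⟨z', i', j, hij, h1, h2⟩) | ⟨j, hj, h1, h2⟩ <;>
    simp_all [vA, vB, ln, sx, zn, iso]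

lemma edge_to_vA (hb : (a, (vA : ERVoter α n g h)) ∈ EREdgesH1 X) : False := by
  rcases hb with (⟨h1, h2⟩ | ⟨j, hj, h1, h2⟩ | ⟨i', j, hij, h1, h2⟩ | ⟨i', x', hi, h1, h2⟩
    | ⟨x', z', j, hz, hj, h1, h2⟩ | ⟨z', i', j, hij, h1, h2⟩) | ⟨j, hj, h1, h2⟩ <;>
    simp_all [vA, vB, ln, sx, zn, iso]

lemma edge_to_vB (hb : (a, (vB : ERVoter α n g h)) ∈ EREdgesH1 X) : a = vA := by
  rcases hb with (⟨h1, h2⟩ | ⟨j, hj, h1, h2⟩ | ⟨i', j, hij, h1, h2⟩ | ⟨i', x', hi, h1, h2⟩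
    | ⟨x', z', j, hz, hj, h1, h2⟩ | ⟨z', i', j, hij, h1, h2⟩) | ⟨j, hj, h1, h2⟩ <;>
    simp_all [vA, vB, ln, sx, zn, iso]

lemma edge_to_ln {j : Fin (n ^ 2 - h - 1)} (hb : (a, ln j) ∈ EREdgesH1 X) :
    ((j : ℕ) = 0 ∧ (a = vA ∨ a = vB)) ∨
      (∃ i : Fin (n ^ 2 - h - 1), (i : ℕ) + 1 = (j : ℕ) ∧ a = ln i) := by
  rcases hb with (⟨h1, h2⟩ | ⟨j', hj, h1, h2⟩ | ⟨i', j', hij, h1, h2⟩ | ⟨i', x', hi, h1, h2⟩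
    | ⟨x', z', j', hz, hj, h1, h2⟩ | ⟨z', i', j', hij, h1, h2⟩) | ⟨j', hj, h1, h2⟩ <;>
    simp_all [vA, vB, ln, sx, zn, iso]
  all_goals
    first
      | (subst h2; exact Or.inl ⟨hj, Or.inr h1⟩)
      | (subst h2; exact Or.inr ⟨i', hij, h1⟩)
      | (subst h2; exact Or.inl ⟨hj, Or.inl h1⟩)

lemma edge_to_ln_H2 {j : Fin (n ^ 2 - h - 1)} (hb : (a, ln j) ∈ EREdgesH2 X) :
    ((j : ℕ) = 0 ∧ a = vB) ∨
      (∃ i : Fin (n ^ 2 - h - 1), (i : ℕ) + 1 = (j : ℕ) ∧ a = ln i) := by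
  rcases hb with ⟨h1, h2⟩ | ⟨j', hj, h1, h2⟩ | ⟨i', j', hij, h1, h2⟩ | ⟨i', x', hi, h1, h2⟩
    | ⟨x', z', j', hz, hj, h1, h2⟩ | ⟨z', i', j', hij, h1, h2⟩ <;>
    simp_all [vA, vB, ln, sx, zn, iso]
  all_goals
    first
      | (subst h2; exact Or.inl ⟨hj, h1⟩)
      | (subst h2; exact Or.inr ⟨i', hij, h1⟩)

lemma edge_to_sx {x : Fin g} (hb : (a, sx x) ∈ EREdgesH1 X) :
    ∃ i : Fin (n ^ 2 - h - 1), (i : ℕ) + 1 = n ^ 2 - h - 1 ∧ a = ln i := by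
  rcases hb with (⟨h1, h2⟩ | ⟨j', hj, h1, h2⟩ | ⟨i', j', hij, h1, h2⟩ | ⟨i', x', hi, h1, h2⟩
    | ⟨x', z', j', hz, hj, h1, h2⟩ | ⟨z', i', j', hij, h1, h2⟩) | ⟨j', hj, h1, h2⟩ <;>
    simp_all [vA, vB, ln, sx, zn, iso]
  all_goals
    (subst h2
     exact ⟨i', hi, h1⟩)

lemma edge_to_zn {z : α} {j : Fin n} (hb : (a, zn z j) ∈ EREdgesH1 X) :
    ((j : ℕ) = 0 ∧ ∃ x, z ∈ X x ∧ a = sx x) ∨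
      (∃ i : Fin n, (i : ℕ) + 1 = (j : ℕ) ∧ a = zn z i) := by
  rcases hb with (⟨h1, h2⟩ | ⟨j', hj, h1, h2⟩ | ⟨i', j', hij, h1, h2⟩ | ⟨i', x', hi, h1, h2⟩
    | ⟨x', z', j', hz, hj, h1, h2⟩ | ⟨z', i', j', hij, h1, h2⟩) | ⟨j', hj, h1, h2⟩ <;>
    simp_all [vA, vB, ln, sx, zn, iso]
  all_goals
    first
      | (obtain ⟨hz', hj'⟩ := h2
         subst hz'
         exact Or.inl ⟨by simp [← hj'], x', hz, h1⟩)
      | (obtain ⟨hz', hj'⟩ := h2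
         subst hz'
         exact Or.inr ⟨i', by simp [← hj', hij], h1⟩)

lemma edge_to_iso {k : Fin (g - h + 1)} (hb : (a, iso k) ∈ EREdgesH1 X) : False := by
  rcases hb with (⟨h1, h2⟩ | ⟨j', hj, h1, h2⟩ | ⟨i', j', hij, h1, h2⟩ | ⟨i', x', hi, h1, h2⟩
    | ⟨x', z', j', hz, hj, h1, h2⟩ | ⟨z', i', j', hij, h1, h2⟩) | ⟨j', hj, h1, h2⟩ <;>
    simp_all [vA, vB, ln, sx, zn, iso]

lemma mem_H2_vAvB : ((vA : ERVoter α n g h), vB) ∈ EREdgesH2 X := Or.inl ⟨rfl, rfl⟩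

lemma mem_H2_vBln (hL : 0 < n ^ 2 - h - 1) :
    ((vB : ERVoter α n g h), ln ⟨0, hL⟩) ∈ EREdgesH2 X :=
  Or.inr (Or.inl ⟨⟨0, hL⟩, rfl, rfl, rfl⟩)

lemma mem_H1_vAln (hL : 0 < n ^ 2 - h - 1) :
    ((vA : ERVoter α n g h), ln ⟨0, hL⟩) ∈ EREdgesH1 X :=
  Or.inr ⟨⟨0, hL⟩, rfl, rfl, rfl⟩

lemma mem_H2_lnln {i j : Fin (n ^ 2 - h - 1)} (hij : (i : ℕ) + 1 = (j : ℕ)) :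
    ((ln i : ERVoter α n g h), ln j) ∈ EREdgesH2 X :=
  Or.inr (Or.inr (Or.inl ⟨i, j, hij, rfl, rfl⟩))

lemma mem_H2_lnsx {i : Fin (n ^ 2 - h - 1)} {x : Fin g} (hi : (i : ℕ) + 1 = n ^ 2 - h - 1) :
    ((ln i : ERVoter α n g h), sx x) ∈ EREdgesH2 X :=
  Or.inr (Or.inr (Or.inr (Or.inl ⟨i, x, hi, rfl, rfl⟩)))

lemma mem_H2_sxzn {x : Fin g} {z : α} (hz : z ∈ X x) (hn : 0 < n) :
    ((sx x : ERVoter α n g h), zn z ⟨0, hn⟩) ∈ EREdgesH2 X :=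
  Or.inr (Or.inr (Or.inr (Or.inr (Or.inl ⟨x, z, ⟨0, hn⟩, hz, rfl, rfl, rfl⟩))))

lemma mem_H2_znzn {z : α} {i j : Fin n} (hij : (i : ℕ) + 1 = (j : ℕ)) :
    ((zn z i : ERVoter α n g h), zn z j) ∈ EREdgesH2 X :=
  Or.inr (Or.inr (Or.inr (Or.inr (Or.inr ⟨z, i, j, hij, rfl, rfl⟩))))

end Edges

section Reach
variable {X : Fin g → Finset α} {F : Set (ERVoter α n g h × ERVoter α n g h)}
  {w : ERVoter α n g h} {s : ERVoter α n g h}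

lemma reaches_mono {F' : Set (ERVoter α n g h × ERVoter α n g h)} (hFF : F ⊆ F')
    {a b : ERVoter α n g h} (hab : Reaches F a b) : Reaches F' a b :=
  Relation.ReflTransGen.mono (r := fun a b => (a, b) ∈ F) (p := fun a b => (a, b) ∈ F')
    (fun _ _ hx => hFF hx) _ _ hab

lemma reaches_head {a b c : ERVoter α n g h} (hab : (a, b) ∈ F) (hbc : Reaches F b c) :
    Reaches F a c :=
  Relation.ReflTransGen.head hab hbc

lemma reach_to_vA (hF : F ⊆ EREdgesH1 X) (hs : Reaches F s vA) : s = vA := by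
  rcases hs.cases_tail with heq | ⟨c, _, hc⟩
  · exact heq.symm
  · exact absurd (hF hc) (fun hc' => edge_to_vA hc')

lemma reach_to_vB (hF : F ⊆ EREdgesH1 X) (hs : Reaches F s vB) :
    s = vB ∨ (s = vA ∧ ((vA : ERVoter α n g h), vB) ∈ F) := by
  rcases hs.cases_tail with heq | ⟨c, hsc, hc⟩
  · exact Or.inl heq.symm
  · have hcA : c = vA := edge_to_vB (hF hc)
    subst hcA
    exact Or.inr ⟨reach_to_vA hF hsc, hc⟩

lemma reach_to_iso (hF : F ⊆ EREdgesH1 X) {k : Fin (g - h + 1)}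
    (hs : Reaches F s (iso k)) : s = iso k := by
  rcases hs.cases_tail with heq | ⟨c, _, hc⟩
  · exact heq.symm
  · exact absurd (hF hc) (fun hc' => edge_to_iso hc')

lemma reach_to_sx (hF : F ⊆ EREdgesH1 X) {x : Fin g} (hs : Reaches F s (sx x)) :
    s = sx x ∨ ∃ i : Fin (n ^ 2 - h - 1),
      (i : ℕ) + 1 = n ^ 2 - h - 1 ∧ (ln i, sx x) ∈ F ∧ Reaches F s (ln i) := by
  rcases hs.cases_tail with heq | ⟨c, hsc, hc⟩
  · exact Or.inl heq.symm
  · obtain ⟨i, hi, rfl⟩ := edge_to_sx (hF hc)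
    exact Or.inr ⟨i, hi, hc, hsc⟩

lemma reach_vB_stuck (hF : F ⊆ EREdgesH1 X) (hL : 0 < n ^ 2 - h - 1)
    (hnot : ((vB : ERVoter α n g h), ln ⟨0, hL⟩) ∉ F) (hs : Reaches F vB w) : w = vB := by
  rcases hs.cases_head with heq | ⟨c, hc, hcw⟩
  · exact heq.symm
  · obtain ⟨j, hj, rfl⟩ := edge_from_vB (hF hc)
    have : j = ⟨0, hL⟩ := Fin.ext hj
    subst this
    exact absurd hc hnot

lemma reach_vB_cases (hF : F ⊆ EREdgesH1 X) (hL : 0 < n ^ 2 - h - 1)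
    (hs : Reaches F vB w) : w = vB ∨ Reaches F (ln ⟨0, hL⟩) w := by
  rcases hs.cases_head with heq | ⟨c, hc, hcw⟩
  · exact Or.inl heq.symm
  · obtain ⟨j, hj, rfl⟩ := edge_from_vB (hF hc)
    have : j = ⟨0, hL⟩ := Fin.ext hj
    subst this
    exact Or.inr hcw

lemma reach_vA_cases (hF : F ⊆ EREdgesH1 X) (hL : 0 < n ^ 2 - h - 1)
    (hs : Reaches F vA w) : w = vA ∨ w = vB ∨ Reaches F (ln ⟨0, hL⟩) w := by
  rcases hs.cases_head with heq | ⟨c, hc, hcw⟩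
  · exact Or.inl heq.symm
  · rcases edge_from_vA (hF hc) with rfl | ⟨j, hj, rfl⟩
    · rcases reach_vB_cases hF hL hcw with rfl | hr
      · exact Or.inr (Or.inl rfl)
      · exact Or.inr (Or.inr hr)
    · have : j = ⟨0, hL⟩ := Fin.ext hj
      subst this
      exact Or.inr (Or.inr hcw)

lemma reach_vA_H2 (hF : F ⊆ EREdgesH2 X) (hs : Reaches F vA w) :
    w = vA ∨ Reaches F vB w := by
  rcases hs.cases_head with heq | ⟨c, hc, hcw⟩
  · exact Or.inl heq.symm
  · have : c = vB := edge_from_vA_H2 (hF hc)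
    subst this
    exact Or.inr hcw

lemma reach_vA_vB (hF : F ⊆ EREdgesH1 X) (hL : 0 < n ^ 2 - h - 1)
    (hB0 : ((vB : ERVoter α n g h), ln ⟨0, hL⟩) ∈ F) (hs : Reaches F vA w) :
    w = vA ∨ Reaches F vB w := by
  rcases hs.cases_head with heq | ⟨c, hc, hcw⟩
  · exact Or.inl heq.symm
  · rcases edge_from_vA (hF hc) with rfl | ⟨j, hj, rfl⟩
    · exact Or.inr hcw
    · have : j = ⟨0, hL⟩ := Fin.ext hj
      subst this
      exact Or.inr (reaches_head hB0 hcw)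

/-- Any path from v₁ to a line node uses all the line edges below it. -/
lemma line_climb (hF : F ⊆ EREdgesH1 X) :
    ∀ (m : ℕ) (b : Fin (n ^ 2 - h - 1)), (b : ℕ) = m → Reaches F vA (ln b) →
      ∀ i j : Fin (n ^ 2 - h - 1), (i : ℕ) + 1 = (j : ℕ) → (j : ℕ) ≤ (b : ℕ) →
        (ln i, ln j) ∈ F := by
  intro m
  induction m using Nat.strong_induction_on with
  | _ m IH =>
    intro b hbm hreach i j hij hjb
    rcases hreach.cases_tail with heq | ⟨c, hsc, hc⟩
    · exact absurd heq.symm (vA_ne_ln b)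
    · rcases edge_to_ln (hF hc) with ⟨hb0, _⟩ | ⟨i', hi', rfl⟩
      · omega
      · by_cases hje : (j : ℕ) = (b : ℕ)
        · have hj' : j = b := Fin.ext hje
          have hi'' : i = i' := Fin.ext (by omega)
          subst hj' hi''
          exact hc
        · exact IH (i' : ℕ) (by omega) i' rfl hsc i j hij (by omega)

/-- Build a path along the line. -/
lemma line_build : ∀ (d : ℕ) (i j : Fin (n ^ 2 - h - 1)), (j : ℕ) = (i : ℕ) + d →
    (∀ k l : Fin (n ^ 2 - h - 1), (k : ℕ) + 1 = (l : ℕ) → (l : ℕ) ≤ (j : ℕ) →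
      (ln k, ln l) ∈ F) →
    Reaches F (ln i) (ln j) := by
  intro d
  induction d with
  | zero =>
    intro i j hji _
    have : i = j := Fin.ext (by omega)
    subst this
    exact Relation.ReflTransGen.refl
  | succ d IH =>
    intro i j hji hedges
    have hlt : (i : ℕ) + 1 < n ^ 2 - h - 1 ∨ (i : ℕ) + 1 = (j : ℕ) ∧ d = 0 := by omega
    have hi1 : (i : ℕ) + 1 < n ^ 2 - h - 1 := by
      have := j.isLt
      omega
    refine reaches_head (hedges i ⟨(i : ℕ) + 1, hi1⟩ rfl (by simp; omega)) ?_
    exact IH ⟨(i : ℕ) + 1, hi1⟩ j (by simp; omega) hedges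

/-- Build a path along an element line. -/
lemma zline_build {z : α} : ∀ (d : ℕ) (i j : Fin n), (j : ℕ) = (i : ℕ) + d →
    (∀ k l : Fin n, (k : ℕ) + 1 = (l : ℕ) → (zn z k, zn z l) ∈ F) →
    Reaches F (zn z i) (zn z j) := by
  intro d
  induction d with
  | zero =>
    intro i j hji _
    have : i = j := Fin.ext (by omega)
    subst this
    exact Relation.ReflTransGen.refl
  | succ d IH =>
    intro i j hji hedges
    have hi1 : (i : ℕ) + 1 < n := by
      have := j.isLt
      omega
    refine reaches_head (hedges i ⟨(i : ℕ) + 1, hi1⟩ rfl) ?_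
    exact IH ⟨(i : ℕ) + 1, hi1⟩ j (by simp; omega) hedges

/-- Any path from v₁ into an element line enters through some kept set node. -/
lemma reach_vA_zn (hF : F ⊆ EREdgesH1 X) {z : α} :
    ∀ (m : ℕ) (j : Fin n), (j : ℕ) = m → Reaches F vA (zn z j) →
      ∃ x : Fin g, z ∈ X x ∧ ∃ i : Fin (n ^ 2 - h - 1),
        (i : ℕ) + 1 = n ^ 2 - h - 1 ∧ (ln i, sx x) ∈ F ∧ Reaches F vA (ln i) := by
  intro m
  induction m using Nat.strong_induction_on with
  | _ m IH =>
    intro j hjm hreach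
    rcases hreach.cases_tail with heq | ⟨c, hsc, hc⟩
    · exact absurd heq.symm (by simp [vA, zn])
    · rcases edge_to_zn (hF hc) with ⟨hj0, x, hzx, rfl⟩ | ⟨i', hi', rfl⟩
      · rcases reach_to_sx hF hsc with heq | ⟨i, hi, hisx, hri⟩
        · exact absurd heq (by simp [vA, sx])
        · exact ⟨x, hzx, i, hi, hisx, hri⟩
      · exact IH (i' : ℕ) (by omega) i' rfl hsc

end Reach

section VoteDB
variable {X : Fin g → Finset α} {F : Set (ERVoter α n g h × ERVoter α n g h)}

/-- All L₁ line edges are in `F`. -/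
def LinesIn (F : Set (ERVoter α n g h × ERVoter α n g h)) : Prop :=
  ∀ i j : Fin (n ^ 2 - h - 1), (i : ℕ) + 1 = (j : ℕ) → (ln i, ln j) ∈ F

/-- All element-line edges are in `F`. -/
def ZLinesIn (F : Set (ERVoter α n g h × ERVoter α n g h)) : Prop :=
  ∀ (z : α) (i j : Fin n), (i : ℕ) + 1 = (j : ℕ) → (zn z i, zn z j) ∈ F

lemma linesIn_of_H2 (hsub : EREdgesH2 X ⊆ F) : LinesIn F :=
  fun i j hij => hsub (mem_H2_lnln hij)

lemma zlinesIn_of_H2 (hsub : EREdgesH2 X ⊆ F) : ZLinesIn F :=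
  fun z i j hij => hsub (mem_H2_znzn hij)

lemma reach_u0_ln (hLines : LinesIn F) (hL : 0 < n ^ 2 - h - 1) (i : Fin (n ^ 2 - h - 1)) :
    Reaches F (ln ⟨0, hL⟩) (ln i) :=
  line_build (i : ℕ) ⟨0, hL⟩ i (by simp) (fun k l hkl _ => hLines k l hkl)

/-- In the presence of all line edges, the first line node reaches `sx x` as soon as the
connecting edge is present. -/
lemma reach_u0_sx (hLines : LinesIn F) (hL : 0 < n ^ 2 - h - 1) {x : Fin g}
    (hedge : ((ln ⟨n ^ 2 - h - 1 - 1, by omega⟩ : ERVoter α n g h), sx x) ∈ F) :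
    Reaches F (ln ⟨0, hL⟩) (sx x) :=
  (reach_u0_ln hLines hL _).tail hedge

lemma reach_u0_zn (hLines : LinesIn F) (hZ : ZLinesIn F) (hL : 0 < n ^ 2 - h - 1)
    {x : Fin g} {z : α} (hn : 0 < n)
    (hedge : ((ln ⟨n ^ 2 - h - 1 - 1, by omega⟩ : ERVoter α n g h), sx x) ∈ F)
    (hedge2 : ((sx x : ERVoter α n g h), zn z ⟨0, hn⟩) ∈ F) (j : Fin n) :
    Reaches F (ln ⟨0, hL⟩) (zn z j) :=
  ((reach_u0_sx hLines hL hedge).tail hedge2).trans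
    (zline_build (j : ℕ) ⟨0, hn⟩ j (by simp) (fun k l hkl => hZ z k l hkl))

lemma not_reach_vB_of_stuck (hF : F ⊆ EREdgesH1 X) (hL : 0 < n ^ 2 - h - 1)
    (hnot : ((vB : ERVoter α n g h), ln ⟨0, hL⟩) ∉ F) {w : ERVoter α n g h}
    (hw : w ≠ vB) : ¬ Reaches F vB w :=
  fun hr => hw (reach_vB_stuck hF hL hnot hr)

/-- vote function for the unmodified graphs. -/
def wFull : ERVoter α n g h → Fin 2
  | Sum.inr (Sum.inr (Sum.inr _)) => 1
  | _ => 0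

/-- In any graph between H₂ and H₁, the top voters vote c₀ and the bottom voters c₁. -/
lemma votes_full (hL : 0 < n ^ 2 - h - 1) (hn : 0 < n)
    (hsub : EREdgesH2 X ⊆ F) (hF : F ⊆ EREdgesH1 X) :
    ∀ v, Votes F v (wFull v) := by
  have hLines : LinesIn F := linesIn_of_H2 hsub
  have hZ : ZLinesIn F := zlinesIn_of_H2 hsub
  have hu0 : ∀ i : Fin (n ^ 2 - h - 1), Reaches F (ln ⟨0, hL⟩) (ln i) := reach_u0_ln hLines hL
  have hvBu0 : ((vB : ERVoter α n g h), ln ⟨0, hL⟩) ∈ F := hsub (mem_H2_vBln hL)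
  have hvAvB : ((vA : ERVoter α n g h), vB) ∈ F := hsub mem_H2_vAvB
  intro v
  rcases v with (_ | _) | (i | (x | (⟨z, j⟩ | k)))
  · -- vA
    refine votes0_top hL F _ rfl rfl (Or.inl ⟨Relation.ReflTransGen.refl, fun hr => ?_⟩)
    exact vA_ne_vB.symm (reach_to_vA hF hr)
  · -- vB
    refine votes0_top hL F _ rfl rfl
      (Or.inr (Or.inl ⟨Relation.ReflTransGen.single hvAvB, fun hr => ?_⟩))
    rcases reach_to_vB hF hr with heq | ⟨heq, _⟩ <;> simp_all [vA, vB, ln]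
  · -- line node
    refine votes0_top hL F _ rfl rfl (Or.inr (Or.inr (Or.inr ⟨?_, ?_, hu0 i⟩)))
    · exact reaches_head hvAvB (reaches_head hvBu0 (hu0 i))
    · exact reaches_head hvBu0 (hu0 i)
  · -- sx x
    have hlast : ((ln ⟨n ^ 2 - h - 1 - 1, by omega⟩ : ERVoter α n g h), sx x) ∈ F :=
      hsub (mem_H2_lnsx (by simp; omega))
    have hr3 : Reaches F (ln ⟨0, hL⟩) (sx x) := reach_u0_sx hLines hL hlast
    refine votes0_top hL F _ rfl rfl (Or.inr (Or.inr (Or.inr ⟨?_, ?_, hr3⟩)))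
    · exact reaches_head hvAvB (reaches_head hvBu0 hr3)
    · exact reaches_head hvBu0 hr3
  · -- zn z j
    by_cases hzx : ∃ x, z ∈ X x
    · obtain ⟨x, hzx⟩ := hzx
      have hlast : ((ln ⟨n ^ 2 - h - 1 - 1, by omega⟩ : ERVoter α n g h), sx x) ∈ F :=
        hsub (mem_H2_lnsx (by simp; omega))
      have hr3 : Reaches F (ln ⟨0, hL⟩) (zn z j) :=
        reach_u0_zn hLines hZ hL hn hlast (hsub (mem_H2_sxzn hzx hn)) j
      exact votes1_bot hL F _ rfl rfl (Or.inr ⟨reaches_head hvBu0 hr3, hr3⟩)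
    · refine votes1_bot hL F _ rfl rfl (Or.inl fun hr => ?_)
      obtain ⟨x, hzX, -⟩ := reach_vA_zn hF (j : ℕ) j rfl hr
      exact hzx ⟨x, hzX⟩
  · -- iso
    refine votes1_bot hL F _ rfl rfl (Or.inl fun hr => ?_)
    have := reach_to_iso hF hr
    simp [vA, iso] at this

end VoteDB

section Forward
variable {X : Fin g → Finset α}

/-- The edge set removed in the forward direction. -/
def Efwd (hL : 0 < n ^ 2 - h - 1) (J : Finset (Fin g)) :
    Set (ERVoter α n g h × ERVoter α n g h) :=
  {p | p = (vB, ln ⟨0, hL⟩)} ∪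
    {p | ∃ x ∉ J, p = (ln ⟨n ^ 2 - h - 1 - 1, by omega⟩, sx x)}

variable {J : Finset (Fin g)} {hL : 0 < n ^ 2 - h - 1}

lemma Efwd_subset : Efwd hL J ⊆ (EREdgesH1 X : Set (ERVoter α n g h × ERVoter α n g h)) := by
  rintro p (rfl | ⟨x, hx, rfl⟩)
  · exact H2_subset_H1 (mem_H2_vBln hL)
  · exact H2_subset_H1 (mem_H2_lnsx (by simp; omega))

lemma vBu0_mem_Efwd : ((vB : ERVoter α n g h), ln ⟨0, hL⟩) ∈ Efwd hL J := Or.inl rfl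

lemma lnln_not_mem_Efwd {i j : Fin (n ^ 2 - h - 1)} :
    ((ln i : ERVoter α n g h), ln j) ∉ Efwd hL J := by
  rintro (heq | ⟨x, hx, heq⟩) <;> simp_all [vB, ln, sx, Prod.ext_iff]

lemma vAvB_not_mem_Efwd : ((vA : ERVoter α n g h), vB) ∉ Efwd hL J := by
  rintro (heq | ⟨x, hx, heq⟩) <;> simp_all [vA, vB, ln, sx, Prod.ext_iff]

lemma vAu0_not_mem_Efwd : ((vA : ERVoter α n g h), ln ⟨0, hL⟩) ∉ Efwd hL J := by
  rintro (heq | ⟨x, hx, heq⟩) <;> simp_all [vA, vB, ln, sx, Prod.ext_iff]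

lemma lnsx_mem_Efwd_iff {i : Fin (n ^ 2 - h - 1)} {x : Fin g} :
    ((ln i : ERVoter α n g h), sx x) ∈ Efwd hL J ↔ (i : ℕ) = n ^ 2 - h - 1 - 1 ∧ x ∉ J := by
  constructor
  · rintro (heq | ⟨x', hx', heq⟩)
    · exfalso
      simp [vB, ln, sx, Prod.ext_iff] at heq
    · simp only [ln, sx, Prod.ext_iff, Sum.inr.injEq, Sum.inl.injEq, Fin.ext_iff] at heq
      obtain ⟨h1, h2⟩ := heq
      have hxx : x' = x := Fin.ext (by omega)
      subst hxx
      exact ⟨h1, hx'⟩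
  · rintro ⟨hi, hx⟩
    refine Or.inr ⟨x, hx, ?_⟩
    simp [ln, sx, Prod.ext_iff, Fin.ext_iff, hi]

lemma sxzn_not_mem_Efwd {x : Fin g} {z : α} {j : Fin n} :
    ((sx x : ERVoter α n g h), zn z j) ∉ Efwd hL J := by
  rintro (heq | ⟨x', hx', heq⟩) <;> simp_all [vB, ln, sx, zn, Prod.ext_iff]

lemma znzn_not_mem_Efwd {z z' : α} {i j : Fin n} :
    ((zn z i : ERVoter α n g h), zn z' j) ∉ Efwd hL J := by
  rintro (heq | ⟨x', hx', heq⟩) <;> simp_all [vB, ln, sx, zn, Prod.ext_iff]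

/-- vote function for H₁ minus the forward edge set. -/
def wF1 : ERVoter α n g h → Fin 2
  | Sum.inr (Sum.inr (Sum.inr (Sum.inr _))) => 1
  | _ => 0

/-- vote function for H₂ minus the forward edge set. -/
def wF2 (J : Finset (Fin g)) : ERVoter α n g h → Fin 2
  | Sum.inl _ => 0
  | Sum.inr (Sum.inl _) => 1
  | Sum.inr (Sum.inr (Sum.inl x)) => if x ∈ J then 1 else 0
  | Sum.inr (Sum.inr (Sum.inr _)) => 1

lemma votes_F1 (hL : 0 < n ^ 2 - h - 1) (hn : 0 < n)
    (hcov : ∀ z : α, ∃ x ∈ J, z ∈ X x) :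
    ∀ v, Votes (EREdgesH1 X \ Efwd hL J) v (wF1 v) := by
  set F : Set (ERVoter α n g h × ERVoter α n g h) := EREdgesH1 X \ Efwd hL J with hFdef
  have hF : F ⊆ EREdgesH1 X := Set.diff_subset
  have hLines : LinesIn F := fun i j hij =>
    ⟨H2_subset_H1 (mem_H2_lnln hij), lnln_not_mem_Efwd⟩
  have hZ : ZLinesIn F := fun z i j hij =>
    ⟨H2_subset_H1 (mem_H2_znzn hij), znzn_not_mem_Efwd⟩
  have hu0 : ∀ i : Fin (n ^ 2 - h - 1), Reaches F (ln ⟨0, hL⟩) (ln i) := reach_u0_ln hLines hL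
  have hvAvB : ((vA : ERVoter α n g h), vB) ∈ F :=
    ⟨H2_subset_H1 mem_H2_vAvB, vAvB_not_mem_Efwd⟩
  have hvAu0 : ((vA : ERVoter α n g h), ln ⟨0, hL⟩) ∈ F :=
    ⟨mem_H1_vAln hL, vAu0_not_mem_Efwd⟩
  have hnotB : ((vB : ERVoter α n g h), ln ⟨0, hL⟩) ∉ F := fun hmem => hmem.2 vBu0_mem_Efwd
  have hlastJ : ∀ x ∈ J, ((ln ⟨n ^ 2 - h - 1 - 1, by omega⟩ : ERVoter α n g h), sx x) ∈ F :=
    fun x hx => ⟨H2_subset_H1 (mem_H2_lnsx (by simp; omega)),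
      fun hmem => ((lnsx_mem_Efwd_iff.1 hmem).2 hx)⟩
  have hvA : ∀ i : Fin (n ^ 2 - h - 1), Reaches F vA (ln i) :=
    fun i => reaches_head hvAu0 (hu0 i)
  intro v
  rcases v with (_ | _) | (i | (x | (⟨z, j⟩ | k)))
  · refine votes0_top hL F _ rfl rfl (Or.inl ⟨Relation.ReflTransGen.refl, fun hr => ?_⟩)
    exact vA_ne_vB.symm (reach_to_vA hF hr)
  · refine votes0_top hL F _ rfl rfl
      (Or.inr (Or.inl ⟨Relation.ReflTransGen.single hvAvB, fun hr => ?_⟩))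
    rcases reach_to_vB hF hr with heq | ⟨heq, _⟩ <;> simp_all [vA, vB, ln]
  · exact votes0_top hL F _ rfl rfl
      (Or.inl ⟨hvA i, not_reach_vB_of_stuck hF hL hnotB (by simp [vB, ln])⟩)
  · by_cases hxJ : x ∈ J
    · exact votes0_top hL F _ rfl rfl
        (Or.inl ⟨(hvA _).tail (hlastJ x hxJ), not_reach_vB_of_stuck hF hL hnotB
          (by simp [vB, sx])⟩)
    · refine votes0_top hL F _ rfl rfl (Or.inr (Or.inr (Or.inl ⟨fun hr => ?_, fun hr => ?_⟩)))
      · rcases reach_to_sx hF hr with heq | ⟨i, hi, hisx, -⟩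
        · simp [vB, sx] at heq
        · exact hisx.2 (lnsx_mem_Efwd_iff.2 ⟨by omega, hxJ⟩)
      · rcases reach_to_sx hF hr with heq | ⟨i, hi, hisx, -⟩
        · simp [ln, sx] at heq
        · exact hisx.2 (lnsx_mem_Efwd_iff.2 ⟨by omega, hxJ⟩)
  · obtain ⟨x, hxJ, hzx⟩ := hcov z
    have hsx : ((sx x : ERVoter α n g h), zn z ⟨0, hn⟩) ∈ F :=
      ⟨H2_subset_H1 (mem_H2_sxzn hzx hn), sxzn_not_mem_Efwd⟩
    have hr1 : Reaches F vA (zn z j) :=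
      (((hvA _).tail (hlastJ x hxJ)).tail hsx).trans
        (zline_build (j : ℕ) ⟨0, hn⟩ j (by simp) (fun k l hkl => hZ z k l hkl))
    exact votes0_bot hL F _ rfl rfl
      (Or.inl ⟨hr1, not_reach_vB_of_stuck hF hL hnotB (by simp [vB, zn])⟩)
  · refine votes1_bot hL F _ rfl rfl (Or.inl fun hr => ?_)
    have := reach_to_iso hF hr
    simp [vA, iso] at this

lemma votes_F2 (hL : 0 < n ^ 2 - h - 1) (hn : 0 < n) :
    ∀ v, Votes (EREdgesH2 X \ Efwd hL J) v (wF2 J v) := by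
  set F : Set (ERVoter α n g h × ERVoter α n g h) := EREdgesH2 X \ Efwd hL J with hFdef
  have hF2 : F ⊆ EREdgesH2 X := Set.diff_subset
  have hF : F ⊆ EREdgesH1 X := hF2.trans H2_subset_H1
  have hLines : LinesIn F := fun i j hij => ⟨mem_H2_lnln hij, lnln_not_mem_Efwd⟩
  have hu0 : ∀ i : Fin (n ^ 2 - h - 1), Reaches F (ln ⟨0, hL⟩) (ln i) := reach_u0_ln hLines hL
  have hvAvB : ((vA : ERVoter α n g h), vB) ∈ F := ⟨mem_H2_vAvB, vAvB_not_mem_Efwd⟩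
  have hnotB : ((vB : ERVoter α n g h), ln ⟨0, hL⟩) ∉ F := fun hmem => hmem.2 vBu0_mem_Efwd
  have hnotA : ∀ w' : ERVoter α n g h, w' ≠ vA → w' ≠ vB → ¬ Reaches F vA w' := by
    intro w' hA hB hr
    rcases reach_vA_H2 hF2 hr with heq | hr2
    · exact hA heq
    · exact hB (reach_vB_stuck hF hL hnotB hr2)
  intro v
  rcases v with (_ | _) | (i | (x | (⟨z, j⟩ | k)))
  · refine votes0_top hL F _ rfl rfl (Or.inl ⟨Relation.ReflTransGen.refl, fun hr => ?_⟩)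
    exact vA_ne_vB.symm (reach_to_vA hF hr)
  · refine votes0_top hL F _ rfl rfl
      (Or.inr (Or.inl ⟨Relation.ReflTransGen.single hvAvB, fun hr => ?_⟩))
    rcases reach_to_vB hF hr with heq | ⟨heq, _⟩ <;> simp_all [vA, vB, ln]
  · exact votes1_top hL F _ rfl rfl
      (Or.inl ⟨hnotA _ (by simp [vA, ln]) (by simp [vB, ln]), hu0 i⟩)
  · by_cases hxJ : x ∈ J
    · have hlast : ((ln ⟨n ^ 2 - h - 1 - 1, by omega⟩ : ERVoter α n g h), sx x) ∈ F :=
        ⟨mem_H2_lnsx (by simp; omega), fun hmem => ((lnsx_mem_Efwd_iff.1 hmem).2 hxJ)⟩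
      have : Votes F (sx x) 1 := votes1_top hL F _ rfl rfl
        (Or.inl ⟨hnotA _ (by simp [vA, sx]) (by simp [vB, sx]), (hu0 _).tail hlast⟩)
      simpa [wF2, hxJ, sx] using this
    · have : Votes F (sx x) 0 := by
        refine votes0_top hL F _ rfl rfl (Or.inr (Or.inr (Or.inl ⟨fun hr => ?_, fun hr => ?_⟩)))
        · rcases reach_to_sx hF hr with heq | ⟨i, hi, hisx, -⟩
          · simp [vB, sx] at heq
          · exact hisx.2 (lnsx_mem_Efwd_iff.2 ⟨by omega, hxJ⟩)
        · rcases reach_to_sx hF hr with heq | ⟨i, hi, hisx, -⟩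
          · simp [ln, sx] at heq
          · exact hisx.2 (lnsx_mem_Efwd_iff.2 ⟨by omega, hxJ⟩)
      simpa [wF2, hxJ, sx] using this
  · exact votes1_bot hL F _ rfl rfl
      (Or.inl (hnotA _ (by simp [vA, zn]) (by simp [vB, zn])))
  · refine votes1_bot hL F _ rfl rfl (Or.inl fun hr => ?_)
    have := reach_to_iso hF hr
    simp [vA, iso] at this

end Forward

section Sums
variable {X : Fin g → Finset α} {J : Finset (Fin g)}

lemma sum_wFull (hcard : Fintype.card α = n) :
    ∑ v : ERVoter α n g h, (if wFull v = 0 then (1 : ℤ) else -1)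
      = 2 + ((n ^ 2 - h - 1 : ℕ) : ℤ) + g - (n : ℤ) * n - ((g - h + 1 : ℕ) : ℤ) := by
  rw [Fintype.sum_sum_type, Fintype.sum_sum_type, Fintype.sum_sum_type, Fintype.sum_sum_type]
  simp [wFull, Fintype.card_prod, hcard, Finset.card_univ]
  push_cast
  ring

lemma sum_wF1 (hcard : Fintype.card α = n) :
    ∑ v : ERVoter α n g h, (if wF1 v = 0 then (1 : ℤ) else -1)
      = 2 + ((n ^ 2 - h - 1 : ℕ) : ℤ) + g + (n : ℤ) * n - ((g - h + 1 : ℕ) : ℤ) := by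
  rw [Fintype.sum_sum_type, Fintype.sum_sum_type, Fintype.sum_sum_type, Fintype.sum_sum_type]
  simp [wF1, Fintype.card_prod, hcard, Finset.card_univ]
  push_cast
  ring

lemma sum_wF2 (hcard : Fintype.card α = n) :
    ∑ v : ERVoter α n g h, (if wF2 J v = 0 then (1 : ℤ) else -1)
      = 2 - ((n ^ 2 - h - 1 : ℕ) : ℤ) + ((g : ℤ) - 2 * J.card) - (n : ℤ) * n
        - ((g - h + 1 : ℕ) : ℤ) := by
  rw [Fintype.sum_sum_type, Fintype.sum_sum_type, Fintype.sum_sum_type, Fintype.sum_sum_type]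
  have hsx : ∑ x : Fin g,
      (if wF2 J (Sum.inr (Sum.inr (Sum.inl x)) : ERVoter α n g h) = 0 then (1 : ℤ) else -1)
      = (g : ℤ) - 2 * J.card := by
    have hcongr : ∀ x : Fin g,
        (if wF2 J (Sum.inr (Sum.inr (Sum.inl x)) : ERVoter α n g h) = 0 then (1 : ℤ) else -1)
          = (if x ∈ J then (-1 : ℤ) else 1) := by
      intro x
      by_cases hx : x ∈ J <;> simp [wF2, hx]
    rw [Finset.sum_congr rfl (fun x _ => hcongr x), Finset.sum_ite, Finset.sum_const,
      Finset.sum_const]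
    have hJu : Finset.univ.filter (fun x => x ∈ J) = J := Finset.filter_univ_mem J
    have hsplit := Finset.card_filter_add_card_filter_not
      (s := (Finset.univ : Finset (Fin g))) (p := fun x => x ∈ J)
    rw [hJu] at hsplit ⊢
    have hcardu : (Finset.univ : Finset (Fin g)).card = g := by simp
    have hle : J.card ≤ g := by
      have := Finset.card_le_card (Finset.subset_univ J)
      omega
    have hnc : (Finset.univ.filter (fun x => ¬ x ∈ J)).card = g - J.card := by omega
    rw [hnc]
    simp [nsmul_eq_mul]
    push_cast [Nat.cast_sub hle]
    ring
  rw [hsx]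
  simp [wF2, Fintype.card_prod, hcard, Finset.card_univ]
  push_cast
  ring

end Sums

section Converse
variable {X : Fin g → Finset α} {F : Set (ERVoter α n g h × ERVoter α n g h)}

/-- Embedding of the "top" voters. -/
def embTop : Bool ⊕ (Fin (n ^ 2 - h - 1) ⊕ Fin g) ↪ ERVoter α n g h where
  toFun y := match y with
    | Sum.inl b => Sum.inl b
    | Sum.inr (Sum.inl i) => ln i
    | Sum.inr (Sum.inr x) => sx x
  inj' := by
    rintro (b | (i | x)) (b' | (i' | x')) hy <;> simp_all [ln, sx]

/-- Embedding of the "bottom" voters. -/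
def embBot : (α × Fin n) ⊕ Fin (g - h + 1) ↪ ERVoter α n g h where
  toFun y := Sum.inr (Sum.inr (Sum.inr y))
  inj' := by intro a b hab; simpa using hab

def embLn : Fin (n ^ 2 - h - 1) ↪ ERVoter α n g h where
  toFun := ln
  inj' := by intro a b hab; simpa [ln] using hab

def embSx : Fin g ↪ ERVoter α n g h where
  toFun := sx
  inj' := by intro a b hab; simpa [sx] using hab

def embZn : α × Fin n ↪ ERVoter α n g h where
  toFun p := zn p.1 p.2
  inj' := by
    rintro ⟨z, i⟩ ⟨z', i'⟩ hab
    simpa [zn, Prod.ext_iff] using hab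

/-- The top voters as a finset. -/
def topF : Finset (ERVoter α n g h) := Finset.univ.map embTop
/-- The bottom voters as a finset. -/
def botF : Finset (ERVoter α n g h) := Finset.univ.map embBot

lemma topF_card : (topF : Finset (ERVoter α n g h)).card = 2 + (n ^ 2 - h - 1) + g := by
  simp [topF, Fintype.card_sum]
  ring

lemma botF_card (hcard : Fintype.card α = n) :
    (botF : Finset (ERVoter α n g h)).card = n * n + (g - h + 1) := by
  simp [botF, Fintype.card_sum, Fintype.card_prod, hcard]

lemma top_or_bot (v : ERVoter α n g h) : v ∈ topF ∨ v ∈ botF := by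
  rcases v with (b | (i | (x | y)))
  · exact Or.inl (Finset.mem_map.2 ⟨Sum.inl b, Finset.mem_univ _, rfl⟩)
  · exact Or.inl (Finset.mem_map.2 ⟨Sum.inr (Sum.inl i), Finset.mem_univ _, rfl⟩)
  · exact Or.inl (Finset.mem_map.2 ⟨Sum.inr (Sum.inr x), Finset.mem_univ _, rfl⟩)
  · exact Or.inr (Finset.mem_map.2 ⟨y, Finset.mem_univ _, rfl⟩)

lemma not_top_and_bot {v : ERVoter α n g h} (ht : v ∈ topF) (hb : v ∈ botF) : False := by
  obtain ⟨y, -, rfl⟩ := Finset.mem_map.1 hb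
  obtain ⟨y', -, hy'⟩ := Finset.mem_map.1 ht
  rcases y' with (b | (i | x)) <;> simp [embTop, embBot, ln, sx] at hy'
  all_goals cases hy'

lemma mem_botF_elim {v : ERVoter α n g h} (hb : v ∈ botF) :
    (∃ z j, v = zn z j) ∨ ∃ k, v = iso k := by
  obtain ⟨y, -, rfl⟩ := Finset.mem_map.1 hb
  rcases y with (⟨z, j⟩ | k)
  · exact Or.inl ⟨z, j, rfl⟩
  · exact Or.inr ⟨k, rfl⟩

lemma ln_mem_topF (i : Fin (n ^ 2 - h - 1)) : (ln i : ERVoter α n g h) ∈ topF :=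
  Finset.mem_map.2 ⟨Sum.inr (Sum.inl i), Finset.mem_univ _, rfl⟩

lemma sx_mem_topF (x : Fin g) : (sx x : ERVoter α n g h) ∈ topF :=
  Finset.mem_map.2 ⟨Sum.inr (Sum.inr x), Finset.mem_univ _, rfl⟩

lemma not_votes_both (hL : 0 < n ^ 2 - h - 1) {v : ERVoter α n g h}
    (h0 : Votes F v 0) (h1 : Votes F v 1) : False := by
  have ha := h0 1 (by decide)
  have hb := h1 0 (by decide)
  exact absurd hb (not_lt.2 ha.le)

/-- Master counting bound. -/
lemma MoV_le_of (hL : 0 < n ^ 2 - h - 1) (F : Set (ERVoter α n g h × ERVoter α n g h))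
    (U A : Finset (ERVoter α n g h)) (hU : U ⊆ topF) (hAbot : A ⊆ botF)
    (hbotTotal : ∀ v ∈ (botF : Finset (ERVoter α n g h)), Votes F v 0 ∨ Votes F v 1)
    (hA : ∀ v ∈ (botF : Finset (ERVoter α n g h)), Votes F v 0 → v ∈ A)
    (hU1 : ∀ v ∈ U, Votes F v 1) :
    MoV F ERScores ERSeeds ERMsg
      ≤ ((topF : Finset (ERVoter α n g h)).card : ℤ) - U.card + A.card
        - (((botF : Finset (ERVoter α n g h)).card : ℤ) - A.card + U.card) := by
  have hV0 : finalVoters F ERScores ERSeeds ERMsg 0 ⊆ (topF \ U) ∪ A := by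
    intro v hv
    have hv0 : Votes F v 0 := (mem_finalVoters_iff F v 0).1 hv
    rcases top_or_bot v with ht | hb
    · refine Finset.mem_union_left _ (Finset.mem_sdiff.2 ⟨ht, fun hvU => ?_⟩)
      exact not_votes_both hL hv0 (hU1 v hvU)
    · exact Finset.mem_union_right _ (hA v hb hv0)
  have hV1 : (botF \ A) ∪ U ⊆ finalVoters F ERScores ERSeeds ERMsg 1 := by
    intro v hv
    rw [mem_finalVoters_iff]
    rcases Finset.mem_union.1 hv with hb | hu
    · obtain ⟨hb, hnA⟩ := Finset.mem_sdiff.1 hb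
      rcases hbotTotal v hb with h0 | h1
      · exact absurd (hA v hb h0) hnA
      · exact h1
    · exact hU1 v hu
  set Tc : Finset (ERVoter α n g h) := topF with hTc
  set Bc : Finset (ERVoter α n g h) := botF with hBc
  have hc0 : (finalVoters F ERScores ERSeeds ERMsg 0).card ≤ (Tc.card - U.card) + A.card := by
    calc (finalVoters F ERScores ERSeeds ERMsg 0).card ≤ ((Tc \ U) ∪ A).card :=
          Finset.card_le_card hV0
      _ ≤ (Tc \ U).card + A.card := Finset.card_union_le _ _
      _ = (Tc.card - U.card) + A.card := by rw [Finset.card_sdiff_of_subset hU]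
  have hc1 : (Bc.card - A.card) + U.card ≤ (finalVoters F ERScores ERSeeds ERMsg 1).card := by
    have hdisj : Disjoint (Bc \ A) U := by
      rw [Finset.disjoint_left]
      intro v hv hvU
      exact not_top_and_bot (hU hvU) (Finset.mem_sdiff.1 hv).1
    calc (Bc.card - A.card) + U.card = (Bc \ A).card + U.card := by
          rw [Finset.card_sdiff_of_subset hAbot]
      _ = ((Bc \ A) ∪ U).card := (Finset.card_union_of_disjoint hdisj).symm
      _ ≤ _ := Finset.card_le_card hV1
  rw [MoV_two]
  have hUc : U.card ≤ Tc.card := Finset.card_le_card hU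
  have hAc : A.card ≤ Bc.card := Finset.card_le_card hAbot
  omega

end Converse

section ConverseVotes
variable {X : Fin g → Finset α} {F : Set (ERVoter α n g h × ERVoter α n g h)}

lemma iso_votes1 (hF : F ⊆ EREdgesH1 X) (hL : 0 < n ^ 2 - h - 1) (k : Fin (g - h + 1)) :
    Votes F (iso k) 1 := by
  refine votes1_bot hL F _ rfl rfl (Or.inl fun hr => ?_)
  have := reach_to_iso hF hr
  simp [vA, iso] at this

lemma zn_votes1_of_not_vA (hF : F ⊆ EREdgesH1 X) (hL : 0 < n ^ 2 - h - 1) {z : α} {j : Fin n}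
    (hnA : ¬ Reaches F vA (zn z j)) : Votes F (zn z j) 1 :=
  votes1_bot hL F _ rfl rfl (Or.inl hnA)

lemma zn_votes1_of_vB (hF : F ⊆ EREdgesH1 X) (hL : 0 < n ^ 2 - h - 1) {z : α} {j : Fin n}
    (hB : Reaches F vB (zn z j)) : Votes F (zn z j) 1 := by
  rcases reach_vB_cases hF hL hB with heq | hr
  · exact absurd heq (by simp [vB, zn])
  · exact votes1_bot hL F _ rfl rfl (Or.inr ⟨hB, hr⟩)

lemma bot_total (hF : F ⊆ EREdgesH1 X) (hL : 0 < n ^ 2 - h - 1) :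
    ∀ v ∈ (botF : Finset (ERVoter α n g h)), Votes F v 0 ∨ Votes F v 1 := by
  intro v hv
  rcases mem_botF_elim hv with ⟨z, j, rfl⟩ | ⟨k, rfl⟩
  · by_cases hA : Reaches F vA (zn z j)
    · by_cases hB : Reaches F vB (zn z j)
      · exact Or.inr (zn_votes1_of_vB hF hL hB)
      · exact Or.inl (votes0_bot hL F _ rfl rfl (Or.inl ⟨hA, hB⟩))
    · exact Or.inr (zn_votes1_of_not_vA hF hL hA)
  · exact Or.inr (iso_votes1 hF hL k)

lemma bot_votes1_H2 (hF2 : F ⊆ EREdgesH2 X) (hF : F ⊆ EREdgesH1 X) (hL : 0 < n ^ 2 - h - 1) :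
    ∀ v ∈ (botF : Finset (ERVoter α n g h)), Votes F v 1 := by
  intro v hv
  rcases mem_botF_elim hv with ⟨z, j, rfl⟩ | ⟨k, rfl⟩
  · by_cases hA : Reaches F vA (zn z j)
    · rcases reach_vA_H2 hF2 hA with heq | hr
      · exact absurd heq (by simp [vA, zn])
      · exact zn_votes1_of_vB hF hL hr
    · exact zn_votes1_of_not_vA hF hL hA
  · exact iso_votes1 hF hL k

lemma zn_votes0_fact (hF : F ⊆ EREdgesH1 X) (hL : 0 < n ^ 2 - h - 1) {z : α} {j : Fin n}
    (h0 : Votes F (zn z j) 0) :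
    Reaches F vA (zn z j) ∧ ¬ Reaches F vB (zn z j) := by
  constructor
  · by_contra hnA
    exact not_votes_both hL h0 (zn_votes1_of_not_vA hF hL hnA)
  · intro hB
    exact not_votes_both hL h0 (zn_votes1_of_vB hF hL hB)

end ConverseVotes

section Main
variable {X : Fin g → Finset α}

lemma forward_main (hL : 0 < n ^ 2 - h - 1) (hn : 0 < n) (hcard : Fintype.card α = n)
    (J : Finset (Fin g)) (hJh : J.card ≤ h)
    (hcov : ∀ z : α, ∃ x ∈ J, z ∈ X x) :
    ∃ E' : Set (ERVoter α n g h × ERVoter α n g h), E' ⊆ EREdgesH1 X ∧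
      (0 : ℚ) <
        (((MoV (EREdgesH1 X \ E') ERScores (ERSeeds : Set (ERVoter α n g h)) ERMsg -
            MoV (EREdgesH1 X) ERScores (ERSeeds : Set (ERVoter α n g h)) ERMsg) +
          (MoV (EREdgesH2 X \ E') ERScores (ERSeeds : Set (ERVoter α n g h)) ERMsg -
            MoV (EREdgesH2 X) ERScores (ERSeeds : Set (ERVoter α n g h)) ERMsg) : ℤ) : ℚ)
          / 2 := by
  refine ⟨Efwd hL J, Efwd_subset, ?_⟩
  have e1 : MoV (EREdgesH1 X) ERScores (ERSeeds : Set (ERVoter α n g h)) ERMsg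
      = 2 + ((n ^ 2 - h - 1 : ℕ) : ℤ) + g - (n : ℤ) * n - ((g - h + 1 : ℕ) : ℤ) := by
    rw [MoV_eq_sum _ wFull (votes_full hL hn H2_subset_H1 subset_rfl), sum_wFull hcard]
  have e2 : MoV (EREdgesH2 X) ERScores (ERSeeds : Set (ERVoter α n g h)) ERMsg
      = 2 + ((n ^ 2 - h - 1 : ℕ) : ℤ) + g - (n : ℤ) * n - ((g - h + 1 : ℕ) : ℤ) := by
    rw [MoV_eq_sum _ wFull (votes_full hL hn subset_rfl H2_subset_H1), sum_wFull hcard]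
  have e3 : MoV (EREdgesH1 X \ Efwd hL J) ERScores (ERSeeds : Set (ERVoter α n g h)) ERMsg
      = 2 + ((n ^ 2 - h - 1 : ℕ) : ℤ) + g + (n : ℤ) * n - ((g - h + 1 : ℕ) : ℤ) := by
    rw [MoV_eq_sum _ wF1 (votes_F1 hL hn hcov), sum_wF1 hcard]
  have e4 : MoV (EREdgesH2 X \ Efwd hL J) ERScores (ERSeeds : Set (ERVoter α n g h)) ERMsg
      = 2 - ((n ^ 2 - h - 1 : ℕ) : ℤ) + ((g : ℤ) - 2 * J.card) - (n : ℤ) * n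
        - ((g - h + 1 : ℕ) : ℤ) := by
    rw [MoV_eq_sum _ (wF2 J) (votes_F2 hL hn), sum_wF2 hcard]
  rw [e1, e2, e3, e4]
  have hpow : (n : ℤ) * n = ((n ^ 2 : ℕ) : ℤ) := by push_cast [pow_two]; ring
  refine div_pos ?_ (by norm_num)
  rw [show ((0 : ℚ) = ((0 : ℤ) : ℚ)) by norm_cast]
  rw [Int.cast_lt]
  rw [hpow]
  omega

set_option maxHeartbeats 2000000 in
lemma converse_main (hL : 0 < n ^ 2 - h - 1) (hcard : Fintype.card α = n)
    (hh : 1 ≤ h) (hhg : h ≤ g) (hgn : g < n)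
    (E' : Set (ERVoter α n g h × ERVoter α n g h)) (hE : E' ⊆ EREdgesH1 X)
    (hpos : (0 : ℚ) <
        (((MoV (EREdgesH1 X \ E') ERScores (ERSeeds : Set (ERVoter α n g h)) ERMsg -
            MoV (EREdgesH1 X) ERScores (ERSeeds : Set (ERVoter α n g h)) ERMsg) +
          (MoV (EREdgesH2 X \ E') ERScores (ERSeeds : Set (ERVoter α n g h)) ERMsg -
            MoV (EREdgesH2 X) ERScores (ERSeeds : Set (ERVoter α n g h)) ERMsg) : ℤ) : ℚ)
          / 2) :
    ∃ J : Finset (Fin g), J.card ≤ h ∧ ∀ z : α, ∃ x ∈ J, z ∈ X x := by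
  have hn : 0 < n := by omega
  set F1 : Set (ERVoter α n g h × ERVoter α n g h) := EREdgesH1 X \ E' with hF1def
  set F2 : Set (ERVoter α n g h × ERVoter α n g h) := EREdgesH2 X \ E' with hF2def
  have hF1 : F1 ⊆ EREdgesH1 X := Set.diff_subset
  have hF22 : F2 ⊆ EREdgesH2 X := Set.diff_subset
  have hF21 : F2 ⊆ EREdgesH1 X := hF22.trans H2_subset_H1
  -- base MoV values
  have e1 : MoV (EREdgesH1 X) ERScores (ERSeeds : Set (ERVoter α n g h)) ERMsg
      = 2 + ((n ^ 2 - h - 1 : ℕ) : ℤ) + g - (n : ℤ) * n - ((g - h + 1 : ℕ) : ℤ) := by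
    rw [MoV_eq_sum _ wFull (votes_full hL hn H2_subset_H1 subset_rfl), sum_wFull hcard]
  have e2 : MoV (EREdgesH2 X) ERScores (ERSeeds : Set (ERVoter α n g h)) ERMsg
      = 2 + ((n ^ 2 - h - 1 : ℕ) : ℤ) + g - (n : ℤ) * n - ((g - h + 1 : ℕ) : ℤ) := by
    rw [MoV_eq_sum _ wFull (votes_full hL hn subset_rfl H2_subset_H1), sum_wFull hcard]
  have hposZ : (0 : ℤ) <
      (MoV F1 ERScores (ERSeeds : Set (ERVoter α n g h)) ERMsg -
        (2 + ((n ^ 2 - h - 1 : ℕ) : ℤ) + g - (n : ℤ) * n - ((g - h + 1 : ℕ) : ℤ))) +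
      (MoV F2 ERScores (ERSeeds : Set (ERVoter α n g h)) ERMsg -
        (2 + ((n ^ 2 - h - 1 : ℕ) : ℤ) + g - (n : ℤ) * n - ((g - h + 1 : ℕ) : ℤ))) := by
    have h2 : (0 : ℚ) <
        (((MoV F1 ERScores (ERSeeds : Set (ERVoter α n g h)) ERMsg -
            MoV (EREdgesH1 X) ERScores (ERSeeds : Set (ERVoter α n g h)) ERMsg) +
          (MoV F2 ERScores (ERSeeds : Set (ERVoter α n g h)) ERMsg -
            MoV (EREdgesH2 X) ERScores (ERSeeds : Set (ERVoter α n g h)) ERMsg) : ℤ) : ℚ) := by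
      linarith [hpos]
    have h3 : (0 : ℤ) <
        (MoV F1 ERScores (ERSeeds : Set (ERVoter α n g h)) ERMsg -
          MoV (EREdgesH1 X) ERScores (ERSeeds : Set (ERVoter α n g h)) ERMsg) +
        (MoV F2 ERScores (ERSeeds : Set (ERVoter α n g h)) ERMsg -
          MoV (EREdgesH2 X) ERScores (ERSeeds : Set (ERVoter α n g h)) ERMsg) := by
      exact_mod_cast h2
    rw [e1, e2] at h3
    linarith [h3]
  -- card facts
  have hTz : ((topF : Finset (ERVoter α n g h)).card : ℤ)
      = 2 + ((n ^ 2 - h - 1 : ℕ) : ℤ) + g := by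
    have := topF_card (α := α) (n := n) (g := g) (h := h)
    omega
  have hBz : ((botF : Finset (ERVoter α n g h)).card : ℤ)
      = (n : ℤ) * n + ((g - h + 1 : ℕ) : ℤ) := by
    have hb := botF_card (α := α) (n := n) (g := g) (h := h) hcard
    have hnn : ((n * n : ℕ) : ℤ) = (n : ℤ) * n := by push_cast; ring
    rw [hb]
    push_cast [hnn]
    ring
  -- the bottom c₀ voters of F1
  set A : Finset (ERVoter α n g h) :=
    finalVoters F1 ERScores ERSeeds ERMsg 0 ∩ botF with hAdef
  have hAsub : A ⊆ botF := Finset.inter_subset_right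
  have hAmem : ∀ v ∈ (botF : Finset (ERVoter α n g h)), Votes F1 v 0 → v ∈ A :=
    fun v hv h0 => Finset.mem_inter.2 ⟨(mem_finalVoters_iff F1 v 0).2 h0, hv⟩
  have hM1 : MoV F1 ERScores (ERSeeds : Set (ERVoter α n g h)) ERMsg
      ≤ ((topF : Finset (ERVoter α n g h)).card : ℤ) + A.card
        - (((botF : Finset (ERVoter α n g h)).card : ℤ) - A.card) := by
    have := MoV_le_of hL F1 ∅ A (Finset.empty_subset _) hAsub (bot_total hF1 hL) hAmem
      (by simp)
    simpa using this
  -- weak bound for F2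
  have hM2a : MoV F2 ERScores (ERSeeds : Set (ERVoter α n g h)) ERMsg
      ≤ ((topF : Finset (ERVoter α n g h)).card : ℤ)
        - ((botF : Finset (ERVoter α n g h)).card : ℤ) := by
    have := MoV_le_of hL F2 ∅ ∅ (Finset.empty_subset _) (Finset.empty_subset _)
      (fun v hv => Or.inr (bot_votes1_H2 hF22 hF21 hL v hv))
      (fun v hv h0 => absurd (bot_votes1_H2 hF22 hF21 hL v hv)
        (fun h1 => not_votes_both hL h0 h1))
      (by simp)
    simpa using this
  -- A is nonempty
  have ha1 : 0 < A.card := by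
    by_contra hc
    push_neg at hc
    have hc0 : (A.card : ℤ) = 0 := by omega
    linarith [hposZ, hM1, hM2a, hTz, hBz]
  obtain ⟨v, hvA⟩ := Finset.card_pos.1 ha1
  have hv0 : Votes F1 v 0 := (mem_finalVoters_iff F1 v 0).1 (Finset.mem_inter.1 hvA).1
  have hvb : v ∈ (botF : Finset (ERVoter α n g h)) := (Finset.mem_inter.1 hvA).2
  rcases mem_botF_elim hvb with ⟨z0, j0, rfl⟩ | ⟨k, rfl⟩
  swap
  · exact (not_votes_both hL hv0 (iso_votes1 hF1 hL k)).elim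
  obtain ⟨hR1, hnR2⟩ := zn_votes0_fact hF1 hL hv0
  have hBu0F1 : ((vB : ERVoter α n g h), ln ⟨0, hL⟩) ∉ F1 := by
    intro hmem
    rcases reach_vA_vB hF1 hL hmem hR1 with heq | hr
    · simp [vA, zn] at heq
    · exact hnR2 hr
  have hBu0F2 : ((vB : ERVoter α n g h), ln ⟨0, hL⟩) ∉ F2 :=
    fun hmem => hBu0F1 ⟨H2_subset_H1 hmem.1, hmem.2⟩
  obtain ⟨x0, hzx0, i0, hi0, hedge0, hreach0⟩ := reach_vA_zn hF1 (j0 : ℕ) j0 rfl hR1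
  have hlines1 : LinesIn F1 := by
    intro i j hij
    exact line_climb hF1 (i0 : ℕ) i0 rfl hreach0 i j hij (by have := j.isLt; omega)
  have hlines2 : LinesIn F2 := fun i j hij => ⟨mem_H2_lnln hij, (hlines1 i j hij).2⟩
  -- the chosen collection
  have hlastlt : n ^ 2 - h - 1 - 1 < n ^ 2 - h - 1 := by omega
  set lastI : Fin (n ^ 2 - h - 1) := ⟨n ^ 2 - h - 1 - 1, hlastlt⟩ with hlastIdef
  set Jc : Finset (Fin g) := Finset.univ.filter
    (fun x => ((ln lastI : ERVoter α n g h), sx x) ∈ F1) with hJcdef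
  set C : Finset α := Finset.univ.filter (fun z => ∃ x ∈ Jc, z ∈ X x) with hCdef
  have hcover_of_reach : ∀ (z : α) (j : Fin n), Reaches F1 vA (zn z j) → z ∈ C := by
    intro z j hr
    obtain ⟨x, hzx, i, hi, hedge, -⟩ := reach_vA_zn hF1 (j : ℕ) j rfl hr
    have hilast : i = lastI :=
      Fin.ext (by simp [hlastIdef]; omega)
    subst hilast
    exact Finset.mem_filter.2 ⟨Finset.mem_univ _,
      x, Finset.mem_filter.2 ⟨Finset.mem_univ _, hedge⟩, hzx⟩
  have hAsub2 : A ⊆ (C ×ˢ (Finset.univ : Finset (Fin n))).map embZn := by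
    intro u hu
    have h0 : Votes F1 u 0 := (mem_finalVoters_iff F1 u 0).1 (Finset.mem_inter.1 hu).1
    have hb : u ∈ (botF : Finset (ERVoter α n g h)) := (Finset.mem_inter.1 hu).2
    rcases mem_botF_elim hb with ⟨z, j, rfl⟩ | ⟨k, rfl⟩
    · obtain ⟨hA', -⟩ := zn_votes0_fact hF1 hL h0
      exact Finset.mem_map.2 ⟨(z, j),
        Finset.mem_product.2 ⟨hcover_of_reach z j hA', Finset.mem_univ _⟩, rfl⟩
    · exact (not_votes_both hL h0 (iso_votes1 hF1 hL k)).elim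
  have hacard : A.card ≤ C.card * n := by
    calc A.card ≤ ((C ×ˢ (Finset.univ : Finset (Fin n))).map embZn).card :=
          Finset.card_le_card hAsub2
      _ = C.card * n := by
          rw [Finset.card_map, Finset.card_product]
          simp
  -- the c₁ voters of F2 among the top nodes
  set U : Finset (ERVoter α n g h) := (Finset.univ.map embLn) ∪ Jc.map embSx with hUdef
  have hUsub : U ⊆ topF := by
    intro u hu
    rcases Finset.mem_union.1 hu with hm | hm
    · obtain ⟨i, -, rfl⟩ := Finset.mem_map.1 hm
      exact ln_mem_topF i
    · obtain ⟨x, -, rfl⟩ := Finset.mem_map.1 hm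
      exact sx_mem_topF x
  have hnotA2 : ∀ u : ERVoter α n g h, u ≠ vA → u ≠ vB → ¬ Reaches F2 vA u := by
    intro u hA hB hr
    rcases reach_vA_H2 hF22 hr with heq | hr2
    · exact hA heq
    · exact hB (reach_vB_stuck hF21 hL hBu0F2 hr2)
  have hU1 : ∀ u ∈ U, Votes F2 u 1 := by
    intro u hu
    rcases Finset.mem_union.1 hu with hm | hm
    · obtain ⟨i, -, rfl⟩ := Finset.mem_map.1 hm
      exact votes1_top hL F2 _ rfl rfl
        (Or.inl ⟨hnotA2 _ (by intro h; cases h) (by intro h; cases h),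
          reach_u0_ln hlines2 hL i⟩)
    · obtain ⟨x, hxJc, rfl⟩ := Finset.mem_map.1 hm
      have hedgeF1 : ((ln lastI : ERVoter α n g h), sx x) ∈ F1 :=
        (Finset.mem_filter.1 hxJc).2
      have hedgeF2 : ((ln lastI : ERVoter α n g h), sx x) ∈ F2 :=
        ⟨mem_H2_lnsx (by simp [hlastIdef]; omega), hedgeF1.2⟩
      exact votes1_top hL F2 _ rfl rfl
        (Or.inl ⟨hnotA2 _ (by intro h; cases h) (by intro h; cases h),
          (reach_u0_ln hlines2 hL _).tail hedgeF2⟩)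
  have hUcard : U.card = (n ^ 2 - h - 1) + Jc.card := by
    rw [hUdef, Finset.card_union_of_disjoint, Finset.card_map, Finset.card_map]
    · simp
    · rw [Finset.disjoint_left]
      rintro u hm hm'
      obtain ⟨i, -, rfl⟩ := Finset.mem_map.1 hm
      obtain ⟨x, -, hx⟩ := Finset.mem_map.1 hm'
      simp [embLn, embSx, ln, sx] at hx
      cases hx
  have hM2 : MoV F2 ERScores (ERSeeds : Set (ERVoter α n g h)) ERMsg
      ≤ ((topF : Finset (ERVoter α n g h)).card : ℤ) - U.card
        - (((botF : Finset (ERVoter α n g h)).card : ℤ) + U.card) := by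
    have := MoV_le_of hL F2 U ∅ hUsub (Finset.empty_subset _)
      (fun v hv => Or.inr (bot_votes1_H2 hF22 hF21 hL v hv))
      (fun v hv h0 => absurd (bot_votes1_H2 hF22 hF21 hL v hv)
        (fun h1 => not_votes_both hL h0 h1))
      hU1
    simpa using this
  -- final arithmetic
  have hUz : (U.card : ℤ) = ((n ^ 2 - h - 1 : ℕ) : ℤ) + Jc.card := by
    rw [hUcard]; push_cast; ring
  have f1 : ((n ^ 2 - h - 1 : ℕ) : ℤ) + (Jc.card : ℤ) < (A.card : ℤ) := by
    linarith [hposZ, hM1, hM2, hTz, hBz, hUz]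
  have f2 : (A.card : ℤ) ≤ (C.card : ℤ) * n := by exact_mod_cast hacard
  have f3 : (C.card : ℤ) ≤ n := by
    have := Finset.card_le_univ C
    simp [hcard] at this
    exact_mod_cast this
  have hnn2 : (n : ℤ) * n = ((n ^ 2 : ℕ) : ℤ) := by push_cast [pow_two]; ring
  have hCn : (C.card : ℤ) * n ≤ ((n ^ 2 : ℕ) : ℤ) := by
    calc (C.card : ℤ) * n ≤ (n : ℤ) * n := by
          apply mul_le_mul_of_nonneg_right f3
          positivity
      _ = ((n ^ 2 : ℕ) : ℤ) := hnn2
  refine ⟨Jc, ?_, ?_⟩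
  · -- |Jc| ≤ h
    omega
  · -- Jc covers
    have hCge : (n : ℤ) ≤ C.card := by
      by_contra hlt
      push_neg at hlt
      have hle : (C.card : ℤ) ≤ (n : ℤ) - 1 := by omega
      have hmul : (C.card : ℤ) * n ≤ ((n : ℤ) - 1) * n :=
        mul_le_mul_of_nonneg_right hle (by positivity)
      have hgZ : (h : ℤ) < n := by exact_mod_cast lt_of_le_of_lt hhg hgn
      have hLZ : ((n ^ 2 - h - 1 : ℕ) : ℤ) = ((n ^ 2 : ℕ) : ℤ) - h - 1 := by omega
      nlinarith [f1, f2, hmul, hnn2, hLZ, hgZ]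
    have hCeq : C = Finset.univ := by
      apply Finset.eq_univ_of_card
      have h1 : C.card ≤ Fintype.card α := Finset.card_le_univ C
      have h2 : n ≤ C.card := by exact_mod_cast hCge
      omega
    intro z
    have hz : z ∈ C := hCeq ▸ Finset.mem_univ z
    obtain ⟨-, x, hxJc, hzx⟩ := Finset.mem_filter.1 hz
    exact ⟨x, hxJc, hzx⟩

end Main

end ERAux
/-- There is an edge set E' ⊆ E with expected ΔMoV⁻(E') = (ΔMoV⁻(E',H₁)+ΔMoV⁻(E',H₂))/2 > 0
if and only if the Set-Cover instance admits a cover of size at most h. -/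
theorem edge_removal_positive_expected_deltaMoV_iff_setCover
    {α : Type*} [Fintype α] [DecidableEq α]
    (n g h : ℕ) (hcard : Fintype.card α = n) (hh : 1 ≤ h) (hhg : h ≤ g) (hgn : g < n)
    (hL : 1 ≤ n ^ 2 - h - 1) (X : Fin g → Finset α) :
    (∃ E' : Set (ERVoter α n g h × ERVoter α n g h), E' ⊆ EREdgesH1 X ∧
        (0 : ℚ) <
          (((MoV (EREdgesH1 X \ E') ERScores (ERSeeds : Set (ERVoter α n g h)) ERMsg -
              MoV (EREdgesH1 X) ERScores (ERSeeds : Set (ERVoter α n g h)) ERMsg) +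
            (MoV (EREdgesH2 X \ E') ERScores (ERSeeds : Set (ERVoter α n g h)) ERMsg -
              MoV (EREdgesH2 X) ERScores (ERSeeds : Set (ERVoter α n g h)) ERMsg) : ℤ) : ℚ)
            / 2) ↔
    (∃ J : Finset (Fin g), J.card ≤ h ∧ ∀ z : α, ∃ x ∈ J, z ∈ X x) := by
  constructor
  · rintro ⟨E', hE, hpos⟩
    exact ERAux.converse_main hL hcard hh hhg hgn E' hE hpos
  · rintro ⟨J, hJh, hcov⟩
    exact ERAux.forward_main hL (by omega) hcard J hJh hcov

end EdgeRemovalSetCover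
end

section
/- Let N be a set of n ≥ 1 elements and X a collection of g subsets of N with 1 ≤ h ≤ g and ng − h − 1 ≥ 1. Construct the deterministic election instance with three candidates c_0, c_1, c_2: a node v_1 with score vector ⟨0,1,2⟩, the unique seed, sending the message +1 on c_2; a directed line L_1 of ng−h−1 nodes with score vector ⟨2,0,1⟩; a node v_x with score vector ⟨2,0,1⟩ for each x ∈ X; for each z ∈ N a directed line L_z of g nodes with score vector ⟨0,2,1⟩, with an edge from v_x to the first node of L_z whenever z ∈ x; and n²g² isolated nodes with score vector ⟨2,1,0⟩ together with n²g² isolated nodes with score vector ⟨1,2,0⟩. The addable edges (each with probability 1) are: the edge from v_1 to the first node of L_1, and one edge from the last node of L_1 to each v_x. Then there exists a set E* of addable edges with ΔMoV^+(E*) > 0 if and only if there exists X* ⊆ X with |X*| ≤ h and ⋃_{x∈X*} x = N. -/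
open scoped Classical

section EdgeAdditionSetCover

variable (α : Type*) (n g h : ℕ)

/-- Voters: the node v₁, the line L₁ of ng−h−1 nodes, a node `v_x` for each set of the
collection, a line L_z of g nodes for each element `z`, and 2·n²g² isolated nodes. -/
abbrev EAVoter :=
  Unit ⊕ (Fin (n * g - h - 1) ⊕ (Fin g ⊕ ((α × Fin g) ⊕ (Fin (n ^ 2 * g ^ 2) ⊕ Fin (n ^ 2 * g ^ 2)))))

variable {α n g h}

/-- Base edges: L₁ is a directed line; `v_x` points to the first node of L_z whenever
`z ∈ x`; each L_z is a directed line. -/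
def EAEdges (X : Fin g → Finset α) : Set (EAVoter α n g h × EAVoter α n g h) :=
  { p | (∃ i j : Fin (n * g - h - 1), (i : ℕ) + 1 = (j : ℕ) ∧
          p.1 = Sum.inr (Sum.inl i) ∧ p.2 = Sum.inr (Sum.inl j)) ∨
        (∃ (x : Fin g) (z : α) (j : Fin g), z ∈ X x ∧ (j : ℕ) = 0 ∧
          p.1 = Sum.inr (Sum.inr (Sum.inl x)) ∧
          p.2 = Sum.inr (Sum.inr (Sum.inr (Sum.inl (z, j))))) ∨
        (∃ (z : α) (i j : Fin g), (i : ℕ) + 1 = (j : ℕ) ∧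
          p.1 = Sum.inr (Sum.inr (Sum.inr (Sum.inl (z, i)))) ∧
          p.2 = Sum.inr (Sum.inr (Sum.inr (Sum.inl (z, j))))) }

/-- Addable edges: from v₁ to the first node of L₁, and from the last node of L₁ to each
`v_x`. -/
def EAAddable : Set (EAVoter α n g h × EAVoter α n g h) :=
  { p | (∃ j : Fin (n * g - h - 1), (j : ℕ) = 0 ∧
          p.1 = Sum.inl () ∧ p.2 = Sum.inr (Sum.inl j)) ∨
        (∃ (i : Fin (n * g - h - 1)) (x : Fin g), (i : ℕ) + 1 = n * g - h - 1 ∧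
          p.1 = Sum.inr (Sum.inl i) ∧ p.2 = Sum.inr (Sum.inr (Sum.inl x))) }

/-- Scores: v₁ has ⟨0,1,2⟩; L₁ and the `v_x` have ⟨2,0,1⟩; the L_z have ⟨0,2,1⟩; the
isolated nodes have ⟨2,1,0⟩ and ⟨1,2,0⟩ respectively. -/
def EAScores : EAVoter α n g h → Fin 3 → ℕ
  | Sum.inl _ => ![0, 1, 2]
  | Sum.inr (Sum.inl _) => ![2, 0, 1]
  | Sum.inr (Sum.inr (Sum.inl _)) => ![2, 0, 1]
  | Sum.inr (Sum.inr (Sum.inr (Sum.inl _))) => ![0, 2, 1]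
  | Sum.inr (Sum.inr (Sum.inr (Sum.inr (Sum.inl _)))) => ![2, 1, 0]
  | Sum.inr (Sum.inr (Sum.inr (Sum.inr (Sum.inr _)))) => ![1, 2, 0]

/-- The unique seed is v₁. -/
def EASeeds : Set (EAVoter α n g h) := { v | v = Sum.inl () }

/-- The seed sends a single positive news article on c₂. -/
def EAMsg : EAVoter α n g h → Fin 3 → ℤ := fun _ => ![0, 0, 1]

variable [Fintype α] [DecidableEq α]

lemma sup_scores : (Finset.univ.sup fun v : EAVoter α n g h =>
    Finset.univ.sup fun i => EAScores v i) = 2 := by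
  apply le_antisymm
  · refine Finset.sup_le fun v _ => Finset.sup_le fun i _ => ?_
    rcases v with u | i' | x | p | a | a <;> simp only [EAScores] <;> fin_cases i <;> simp
  · calc (2:ℕ) ≤ Finset.univ.sup fun i => EAScores (Sum.inl () : EAVoter α n g h) i := by
          have h2 := Finset.le_sup (f := fun i => EAScores (Sum.inl () : EAVoter α n g h) i)
            (Finset.mem_univ (2 : Fin 3))
          simpa [EAScores] using h2
      _ ≤ _ := Finset.le_sup (f := fun v : EAVoter α n g h => Finset.univ.sup fun i => EAScores v i) (Finset.mem_univ (Sum.inl ()))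

lemma eps_scores : eps (EAScores : EAVoter α n g h → Fin 3 → ℕ) = 1/3 := by
  unfold eps
  rw [sup_scores]
  norm_num

lemma finalScore_eq (Es : Set (EAVoter α n g h × EAVoter α n g h)) (v : EAVoter α n g h)
    (i : Fin 3) :
    finalScore Es EAScores EASeeds EAMsg v i =
      2/3 * (EAScores v i : ℚ) +
        if Reaches Es (Sum.inl () : EAVoter α n g h) v then ((![0,0,1] : Fin 3 → ℤ) i : ℚ)
        else 0 := by
  unfold finalScore
  rw [eps_scores]
  have hfil : (Finset.univ.filter fun s => s ∈ (EASeeds : Set (EAVoter α n g h)) ∧ Reaches Es s v) =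
      if Reaches Es (Sum.inl () : EAVoter α n g h) v then {Sum.inl ()} else ∅ := by
    split_ifs with hb
    · ext s
      simp only [Finset.mem_filter, Finset.mem_univ, true_and, Finset.mem_singleton, EASeeds,
        Set.mem_setOf_eq]
      constructor
      · exact fun hs => hs.1
      · rintro rfl; exact ⟨rfl, hb⟩
    · ext s
      simp only [Finset.mem_filter, Finset.mem_univ, true_and, Finset.notMem_empty, iff_false,
        EASeeds, Set.mem_setOf_eq, not_and]
      rintro rfl hr; exact hb hr
  rw [hfil]
  split_ifs with hb
  · rw [Finset.sum_singleton]
    norm_num [EAMsg]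
  · rw [Finset.sum_empty]
    ring

lemma forall3_iff (Es : Set (EAVoter α n g h × EAVoter α n g h)) (v : EAVoter α n g h)
    (c : Fin 3) :
    (∀ j, j ≠ c → finalScore Es EAScores EASeeds EAMsg v j
        < finalScore Es EAScores EASeeds EAMsg v c) ↔
      (((0 : Fin 3) ≠ c → finalScore Es EAScores EASeeds EAMsg v 0
          < finalScore Es EAScores EASeeds EAMsg v c) ∧
       ((1 : Fin 3) ≠ c → finalScore Es EAScores EASeeds EAMsg v 1
          < finalScore Es EAScores EASeeds EAMsg v c) ∧
       ((2 : Fin 3) ≠ c → finalScore Es EAScores EASeeds EAMsg v 2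
          < finalScore Es EAScores EASeeds EAMsg v c)) := by
  constructor
  · exact fun H => ⟨H 0, H 1, H 2⟩
  · rintro ⟨h0, h1, h2⟩ j hj
    fin_cases j
    exacts [h0 hj, h1 hj, h2 hj]

lemma vote_seed (Es : Set (EAVoter α n g h × EAVoter α n g h)) (u : Unit) (c : Fin 3) :
    (∀ j, j ≠ c → finalScore Es EAScores EASeeds EAMsg (Sum.inl u : EAVoter α n g h) j
        < finalScore Es EAScores EASeeds EAMsg (Sum.inl u) c) ↔ c = 2 := by
  rw [forall3_iff]
  by_cases hb : Reaches Es (Sum.inl () : EAVoter α n g h) (Sum.inl u)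
  · simp only [finalScore_eq, if_pos hb, EAScores]
    fin_cases c <;> norm_num [Fin.ext_iff, Matrix.cons_val_two, Matrix.vecHead, Matrix.vecTail]
  · simp only [finalScore_eq, if_neg hb, EAScores]
    fin_cases c <;> norm_num [Fin.ext_iff, Matrix.cons_val_two, Matrix.vecHead, Matrix.vecTail]
lemma vote_L1 (Es : Set (EAVoter α n g h × EAVoter α n g h)) (i : Fin (n * g - h - 1))
    (c : Fin 3) :
    (∀ j, j ≠ c → finalScore Es EAScores EASeeds EAMsg (Sum.inr (Sum.inl i) : EAVoter α n g h) j
        < finalScore Es EAScores EASeeds EAMsg (Sum.inr (Sum.inl i)) c) ↔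
      (if Reaches Es (Sum.inl () : EAVoter α n g h) (Sum.inr (Sum.inl i)) then c = 2
       else c = 0) := by
  rw [forall3_iff]
  by_cases hb : Reaches Es (Sum.inl () : EAVoter α n g h) (Sum.inr (Sum.inl i))
  · simp only [finalScore_eq, if_pos hb, EAScores]
    fin_cases c <;> norm_num [Fin.ext_iff, Matrix.cons_val_two, Matrix.vecHead, Matrix.vecTail]
  · simp only [finalScore_eq, if_neg hb, EAScores]
    fin_cases c <;> norm_num [Fin.ext_iff, Matrix.cons_val_two, Matrix.vecHead, Matrix.vecTail]

lemma vote_vX (Es : Set (EAVoter α n g h × EAVoter α n g h)) (x : Fin g) (c : Fin 3) :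
    (∀ j, j ≠ c →
        finalScore Es EAScores EASeeds EAMsg (Sum.inr (Sum.inr (Sum.inl x)) : EAVoter α n g h) j
        < finalScore Es EAScores EASeeds EAMsg (Sum.inr (Sum.inr (Sum.inl x))) c) ↔
      (if Reaches Es (Sum.inl () : EAVoter α n g h) (Sum.inr (Sum.inr (Sum.inl x))) then c = 2
       else c = 0) := by
  rw [forall3_iff]
  by_cases hb : Reaches Es (Sum.inl () : EAVoter α n g h) (Sum.inr (Sum.inr (Sum.inl x)))
  · simp only [finalScore_eq, if_pos hb, EAScores]
    fin_cases c <;> norm_num [Fin.ext_iff, Matrix.cons_val_two, Matrix.vecHead, Matrix.vecTail]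
  · simp only [finalScore_eq, if_neg hb, EAScores]
    fin_cases c <;> norm_num [Fin.ext_iff, Matrix.cons_val_two, Matrix.vecHead, Matrix.vecTail]

lemma vote_LZ (Es : Set (EAVoter α n g h × EAVoter α n g h)) (p : α × Fin g) (c : Fin 3) :
    (∀ j, j ≠ c →
        finalScore Es EAScores EASeeds EAMsg
          (Sum.inr (Sum.inr (Sum.inr (Sum.inl p))) : EAVoter α n g h) j
        < finalScore Es EAScores EASeeds EAMsg (Sum.inr (Sum.inr (Sum.inr (Sum.inl p)))) c) ↔
      (if Reaches Es (Sum.inl () : EAVoter α n g h) (Sum.inr (Sum.inr (Sum.inr (Sum.inl p))))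
       then c = 2 else c = 1) := by
  rw [forall3_iff]
  by_cases hb : Reaches Es (Sum.inl () : EAVoter α n g h) (Sum.inr (Sum.inr (Sum.inr (Sum.inl p))))
  · simp only [finalScore_eq, if_pos hb, EAScores]
    fin_cases c <;> norm_num [Fin.ext_iff, Matrix.cons_val_two, Matrix.vecHead, Matrix.vecTail]
  · simp only [finalScore_eq, if_neg hb, EAScores]
    fin_cases c <;> norm_num [Fin.ext_iff, Matrix.cons_val_two, Matrix.vecHead, Matrix.vecTail]

lemma vote_iso1 (Es : Set (EAVoter α n g h × EAVoter α n g h)) (a : Fin (n ^ 2 * g ^ 2))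
    (c : Fin 3) :
    (∀ j, j ≠ c →
        finalScore Es EAScores EASeeds EAMsg
          (Sum.inr (Sum.inr (Sum.inr (Sum.inr (Sum.inl a)))) : EAVoter α n g h) j
        < finalScore Es EAScores EASeeds EAMsg
            (Sum.inr (Sum.inr (Sum.inr (Sum.inr (Sum.inl a))))) c) ↔ c = 0 := by
  rw [forall3_iff]
  by_cases hb : Reaches Es (Sum.inl () : EAVoter α n g h)
      (Sum.inr (Sum.inr (Sum.inr (Sum.inr (Sum.inl a)))))
  · simp only [finalScore_eq, if_pos hb, EAScores]
    fin_cases c <;> norm_num [Fin.ext_iff, Matrix.cons_val_two, Matrix.vecHead, Matrix.vecTail]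
  · simp only [finalScore_eq, if_neg hb, EAScores]
    fin_cases c <;> norm_num [Fin.ext_iff, Matrix.cons_val_two, Matrix.vecHead, Matrix.vecTail]

lemma vote_iso2 (Es : Set (EAVoter α n g h × EAVoter α n g h)) (a : Fin (n ^ 2 * g ^ 2))
    (c : Fin 3) :
    (∀ j, j ≠ c →
        finalScore Es EAScores EASeeds EAMsg
          (Sum.inr (Sum.inr (Sum.inr (Sum.inr (Sum.inr a)))) : EAVoter α n g h) j
        < finalScore Es EAScores EASeeds EAMsg
            (Sum.inr (Sum.inr (Sum.inr (Sum.inr (Sum.inr a))))) c) ↔ c = 1 := by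
  rw [forall3_iff]
  by_cases hb : Reaches Es (Sum.inl () : EAVoter α n g h)
      (Sum.inr (Sum.inr (Sum.inr (Sum.inr (Sum.inr a)))))
  · simp only [finalScore_eq, if_pos hb, EAScores]
    fin_cases c <;> norm_num [Fin.ext_iff, Matrix.cons_val_two, Matrix.vecHead, Matrix.vecTail]
  · simp only [finalScore_eq, if_neg hb, EAScores]
    fin_cases c <;> norm_num [Fin.ext_iff, Matrix.cons_val_two, Matrix.vecHead, Matrix.vecTail]
def startMem (E' : Set (EAVoter α n g h × EAVoter α n g h)) : Prop :=
  ∃ j : Fin (n * g - h - 1), (j : ℕ) = 0 ∧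
    ((Sum.inl (), Sum.inr (Sum.inl j)) : EAVoter α n g h × EAVoter α n g h) ∈ E'

def lastMem (E' : Set (EAVoter α n g h × EAVoter α n g h)) (x : Fin g) : Prop :=
  ∃ i : Fin (n * g - h - 1), (i : ℕ) + 1 = n * g - h - 1 ∧
    ((Sum.inr (Sum.inl i), Sum.inr (Sum.inr (Sum.inl x))) : EAVoter α n g h × EAVoter α n g h) ∈ E'

def RSet (X : Fin g → Finset α) (E' : Set (EAVoter α n g h × EAVoter α n g h)) :
    EAVoter α n g h → Prop
  | Sum.inl _ => True
  | Sum.inr (Sum.inl _) => startMem E'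
  | Sum.inr (Sum.inr (Sum.inl x)) => startMem E' ∧ lastMem E' x
  | Sum.inr (Sum.inr (Sum.inr (Sum.inl (z, _)))) =>
      startMem E' ∧ ∃ x, lastMem E' x ∧ z ∈ X x
  | Sum.inr (Sum.inr (Sum.inr (Sum.inr _))) => False

lemma reaches_closed (X : Fin g → Finset α) (E' : Set (EAVoter α n g h × EAVoter α n g h))
    (hE' : E' ⊆ EAAddable) {a b : EAVoter α n g h}
    (hab : (a, b) ∈ EAEdges X ∪ E') (ha : RSet X E' a) : RSet X E' b := by
  rcases hab with hab | hab
  · rcases hab with ⟨i, j, hij, ha1, hb1⟩ | ⟨x, z, j, hzx, hj, ha1, hb1⟩ | ⟨z, i, j, hij, ha1, hb1⟩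
    · subst ha1; subst hb1; exact ha
    · subst ha1; subst hb1; exact ⟨ha.1, x, ha.2, hzx⟩
    · subst ha1; subst hb1; exact ha
  · have h2 := hE' hab
    rcases h2 with ⟨j, hj0, ha1, hb1⟩ | ⟨i, x, hi, ha1, hb1⟩
    · subst ha1; subst hb1; exact ⟨j, hj0, hab⟩
    · subst ha1; subst hb1; exact ⟨ha, i, hi, hab⟩

lemma reach_L1_aux (X : Fin g → Finset α) (E' : Set (EAVoter α n g h × EAVoter α n g h))
    (hs : startMem E') :
    ∀ k (hk : k < n * g - h - 1),
      Reaches (EAEdges X ∪ E') (Sum.inl ()) (Sum.inr (Sum.inl ⟨k, hk⟩) : EAVoter α n g h) := by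
  intro k
  induction k with
  | zero =>
    intro hk
    obtain ⟨j, hj0, hj⟩ := hs
    have hje : j = ⟨0, hk⟩ := Fin.ext hj0
    rw [hje] at hj
    exact Relation.ReflTransGen.single (Set.mem_union_right _ hj)
  | succ k ih =>
    intro hk
    refine Relation.ReflTransGen.tail (ih (by omega)) ?_
    exact Set.mem_union_left _ (Or.inl ⟨⟨k, by omega⟩, ⟨k + 1, hk⟩, rfl, rfl, rfl⟩)

lemma reach_vX (X : Fin g → Finset α) (E' : Set (EAVoter α n g h × EAVoter α n g h))
    (hs : startMem E') {x : Fin g} (hx : lastMem E' x) :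
    Reaches (EAEdges X ∪ E') (Sum.inl ()) (Sum.inr (Sum.inr (Sum.inl x)) : EAVoter α n g h) := by
  obtain ⟨i, hi, hmem⟩ := hx
  exact Relation.ReflTransGen.tail (reach_L1_aux X E' hs i.val i.isLt)
    (Set.mem_union_right _ hmem)

lemma reach_LZ (X : Fin g → Finset α) (E' : Set (EAVoter α n g h × EAVoter α n g h))
    (hs : startMem E') {x : Fin g} {z : α} (hx : lastMem E' x) (hzx : z ∈ X x) :
    ∀ k (hk : k < g),
      Reaches (EAEdges X ∪ E') (Sum.inl ())
        (Sum.inr (Sum.inr (Sum.inr (Sum.inl (z, ⟨k, hk⟩)))) : EAVoter α n g h) := by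
  intro k
  induction k with
  | zero =>
    intro hk
    refine Relation.ReflTransGen.tail (reach_vX X E' hs hx) ?_
    exact Set.mem_union_left _ (Or.inr (Or.inl ⟨x, z, ⟨0, hk⟩, hzx, rfl, rfl, rfl⟩))
  | succ k ih =>
    intro hk
    refine Relation.ReflTransGen.tail (ih (by omega)) ?_
    exact Set.mem_union_left _ (Or.inr (Or.inr ⟨z, ⟨k, by omega⟩, ⟨k + 1, hk⟩, rfl, rfl, rfl⟩))

lemma reaches_iff (X : Fin g → Finset α) (E' : Set (EAVoter α n g h × EAVoter α n g h))
    (hE' : E' ⊆ EAAddable) (v : EAVoter α n g h) :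
    Reaches (EAEdges X ∪ E') (Sum.inl () : EAVoter α n g h) v ↔ RSet X E' v := by
  constructor
  · intro hr
    induction hr with
    | refl => trivial
    | tail _ hstep ih => exact reaches_closed X E' hE' hstep ih
  · rcases v with u | i | x | ⟨z, i⟩ | a | a
    · intro _; cases u; exact Relation.ReflTransGen.refl
    · intro hs; exact reach_L1_aux X E' hs i.val i.isLt
    · rintro ⟨hs, hx⟩; exact reach_vX X E' hs hx
    · rintro ⟨hs, x, hx, hzx⟩; exact reach_LZ X E' hs hx hzx i.val i.isLt
    · rintro ⟨⟩
    · rintro ⟨⟩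
lemma MoV_master (hcard : Fintype.card α = n) (hn : 1 ≤ n) (hh : 1 ≤ h) (hhg : h ≤ g)
    (hL : 1 ≤ n * g - h - 1) (Es : Set (EAVoter α n g h × EAVoter α n g h))
    (sL : Prop) (J : Finset (Fin g)) (C : Finset α)
    (H1 : ∀ i : Fin (n * g - h - 1),
      Reaches Es (Sum.inl () : EAVoter α n g h) (Sum.inr (Sum.inl i)) ↔ sL)
    (H2 : ∀ x : Fin g,
      Reaches Es (Sum.inl () : EAVoter α n g h) (Sum.inr (Sum.inr (Sum.inl x))) ↔ (sL ∧ x ∈ J))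
    (H3 : ∀ p : α × Fin g,
      Reaches Es (Sum.inl () : EAVoter α n g h) (Sum.inr (Sum.inr (Sum.inr (Sum.inl p)))) ↔
        (sL ∧ p.1 ∈ C)) :
    MoV Es EAScores (EASeeds : Set (EAVoter α n g h)) EAMsg =
      if sL then ((g : ℤ) - (J.card : ℤ) + (g : ℤ) * (C.card : ℤ) - (n : ℤ) * (g : ℤ))
      else ((g : ℤ) - (h : ℤ) - 1) := by
  have hJg : J.card ≤ g := by
    have := Finset.card_le_univ J
    simpa using this
  have hCn : C.card ≤ n := by
    have := Finset.card_le_univ C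
    simpa [hcard] using this
  have hprod1 : g * (n - C.card) + g * C.card = n * g := by
    rw [← Nat.mul_add]
    rw [Nat.sub_add_cancel hCn]
    exact Nat.mul_comm g n
  have hprod2 : 3 * (n * g) ≤ n ^ 2 * g ^ 2 := by
    have h3 : 3 ≤ n * g := by omega
    calc 3 * (n * g) ≤ (n * g) * (n * g) := Nat.mul_le_mul_right _ h3
      _ = n ^ 2 * g ^ 2 := by ring
  have hprod3 : g ≤ n * g := Nat.le_mul_of_pos_left g hn
  have hprod4 : g * C.card ≤ n * g := by
    calc g * C.card ≤ g * n := Nat.mul_le_mul_left _ hCn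
      _ = n * g := Nat.mul_comm g n
  by_cases hsL : sL
  · have e0 : (finalVoters Es EAScores (EASeeds : Set (EAVoter α n g h)) EAMsg 0).card =
        (g - J.card) + n ^ 2 * g ^ 2 := by
      simp only [finalVoters, Finset.card_filter, Fintype.sum_sum_type, Fintype.sum_prod_type,
        vote_seed, vote_L1, vote_vX, vote_LZ, vote_iso1, vote_iso2, H1, H2, H3, hsL, true_and,
        if_true]
      simp [Finset.sum_ite_mem, Finset.sum_const, Finset.filter_eq', Finset.card_univ]
      have hpt : ∀ x : Fin g, (if x ∈ J then (0 : ℕ) else 1) = if x ∈ Jᶜ then 1 else 0 :=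
        fun x => by by_cases hx : x ∈ J <;> simp [hx]
      simp only [hpt, Finset.sum_ite_mem, Finset.univ_inter, Finset.sum_const, smul_eq_mul,
        mul_one, Finset.card_compl, Fintype.card_fin]
    have e1 : (finalVoters Es EAScores (EASeeds : Set (EAVoter α n g h)) EAMsg 1).card =
        g * (n - C.card) + n ^ 2 * g ^ 2 := by
      simp only [finalVoters, Finset.card_filter, Fintype.sum_sum_type, Fintype.sum_prod_type,
        vote_seed, vote_L1, vote_vX, vote_LZ, vote_iso1, vote_iso2, H1, H2, H3, hsL, true_and,
        if_true]
      simp [Finset.sum_ite_mem, Finset.sum_const, Finset.card_univ, Finset.mul_sum]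
      have hpt : ∀ x : α, (if x ∈ C then (0 : ℕ) else g) = if x ∈ Cᶜ then g else 0 :=
        fun x => by by_cases hx : x ∈ C <;> simp [hx]
      simp only [hpt, Finset.sum_ite_mem, Finset.univ_inter, Finset.sum_const, smul_eq_mul,
        Finset.card_compl, hcard]
      rw [Nat.mul_comm]
    have e2 : (finalVoters Es EAScores (EASeeds : Set (EAVoter α n g h)) EAMsg 2).card =
        1 + ((n * g - h - 1) + (J.card + g * C.card)) := by
      simp only [finalVoters, Finset.card_filter, Fintype.sum_sum_type, Fintype.sum_prod_type,
        vote_seed, vote_L1, vote_vX, vote_LZ, vote_iso1, vote_iso2, H1, H2, H3, hsL, true_and,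
        if_true]
      simp [Finset.sum_ite_mem, Finset.sum_const, Finset.card_univ, Finset.mul_sum,
        Finset.card_filter, Nat.mul_comm]
    have hsup : ((Finset.univ.erase (0 : Fin 3)).sup fun c =>
        (finalVoters Es EAScores (EASeeds : Set (EAVoter α n g h)) EAMsg c).card) =
        g * (n - C.card) + n ^ 2 * g ^ 2 := by
      have herase : (Finset.univ.erase (0 : Fin 3)) = {1, 2} := by decide
      rw [herase]
      rw [show ({1, 2} : Finset (Fin 3)) = insert 1 {2} from rfl, Finset.sup_insert,
        Finset.sup_singleton, e1, e2]
      refine sup_eq_left.mpr ?_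
      omega
    rw [MoV, e0, hsup, if_pos hsL]
    have hc1 : ((g : ℤ) * (C.card : ℤ)) = ((g * C.card : ℕ) : ℤ) := by push_cast; ring
    have hc2 : ((n : ℤ) * (g : ℤ)) = ((n * g : ℕ) : ℤ) := by push_cast; ring
    rw [hc1, hc2]
    omega
  · have e0 : (finalVoters Es EAScores (EASeeds : Set (EAVoter α n g h)) EAMsg 0).card =
        (n * g - h - 1) + (g + n ^ 2 * g ^ 2) := by
      simp only [finalVoters, Finset.card_filter, Fintype.sum_sum_type, Fintype.sum_prod_type,
        vote_seed, vote_L1, vote_vX, vote_LZ, vote_iso1, vote_iso2, H1, H2, H3, hsL, false_and,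
        if_false]
      simp [Finset.sum_const, Finset.card_univ, hsL]
    have e1 : (finalVoters Es EAScores (EASeeds : Set (EAVoter α n g h)) EAMsg 1).card =
        n * g + n ^ 2 * g ^ 2 := by
      simp only [finalVoters, Finset.card_filter, Fintype.sum_sum_type, Fintype.sum_prod_type,
        vote_seed, vote_L1, vote_vX, vote_LZ, vote_iso1, vote_iso2, H1, H2, H3, hsL, false_and,
        if_false]
      simp [Finset.sum_const, Finset.card_univ, hsL, hcard, Nat.mul_comm]
    have e2 : (finalVoters Es EAScores (EASeeds : Set (EAVoter α n g h)) EAMsg 2).card = 1 := by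
      simp only [finalVoters, Finset.card_filter, Fintype.sum_sum_type, Fintype.sum_prod_type,
        vote_seed, vote_L1, vote_vX, vote_LZ, vote_iso1, vote_iso2, H1, H2, H3, hsL, false_and,
        if_false]
      simp [Finset.sum_const, Finset.card_univ, hsL]
    have hsup : ((Finset.univ.erase (0 : Fin 3)).sup fun c =>
        (finalVoters Es EAScores (EASeeds : Set (EAVoter α n g h)) EAMsg c).card) =
        n * g + n ^ 2 * g ^ 2 := by
      have herase : (Finset.univ.erase (0 : Fin 3)) = {1, 2} := by decide
      rw [herase]
      rw [show ({1, 2} : Finset (Fin 3)) = insert 1 {2} from rfl, Finset.sup_insert,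
        Finset.sup_singleton, e1, e2]
      refine sup_eq_left.mpr ?_
      omega
    rw [MoV, e0, hsup, if_neg hsL]
    omega
/-- There is a set E* of addable edges with ΔMoV⁺(E*) > 0 if and only if the Set-Cover
instance admits a cover of size at most h. -/
theorem edge_addition_positive_deltaMoV_iff_setCover {α : Type*} [Fintype α] [DecidableEq α]
    (n g h : ℕ) (hcard : Fintype.card α = n) (hn : 1 ≤ n) (hh : 1 ≤ h) (hhg : h ≤ g)
    (hL : 1 ≤ n * g - h - 1) (X : Fin g → Finset α) :
    (∃ E' : Set (EAVoter α n g h × EAVoter α n g h), E' ⊆ EAAddable ∧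
        0 < MoV (EAEdges X ∪ E') EAScores (EASeeds : Set (EAVoter α n g h)) EAMsg -
              MoV (EAEdges X) EAScores (EASeeds : Set (EAVoter α n g h)) EAMsg) ↔
    (∃ J : Finset (Fin g), J.card ≤ h ∧ ∀ z : α, ∃ x ∈ J, z ∈ X x) := by
  have hc2 : ((n : ℤ) * (g : ℤ)) = ((n * g : ℕ) : ℤ) := by push_cast; ring
  have hbase : MoV (EAEdges X) EAScores (EASeeds : Set (EAVoter α n g h)) EAMsg
      = (g : ℤ) - (h : ℤ) - 1 := by
    have hsub : (∅ : Set (EAVoter α n g h × EAVoter α n g h)) ⊆ EAAddable := by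
      intro p hp; exact absurd hp (Set.notMem_empty p)
    have H1 : ∀ i : Fin (n * g - h - 1),
        Reaches (EAEdges X ∪ ∅) (Sum.inl () : EAVoter α n g h) (Sum.inr (Sum.inl i)) ↔ False := by
      intro i; rw [reaches_iff X ∅ hsub]; simp [RSet, startMem]
    have H2 : ∀ x : Fin g,
        Reaches (EAEdges X ∪ ∅) (Sum.inl () : EAVoter α n g h) (Sum.inr (Sum.inr (Sum.inl x))) ↔
          (False ∧ x ∈ (∅ : Finset (Fin g))) := by
      intro x; rw [reaches_iff X ∅ hsub]; simp [RSet, startMem]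
    have H3 : ∀ p : α × Fin g,
        Reaches (EAEdges X ∪ ∅) (Sum.inl () : EAVoter α n g h)
          (Sum.inr (Sum.inr (Sum.inr (Sum.inl p)))) ↔ (False ∧ p.1 ∈ (∅ : Finset α)) := by
      rintro ⟨z, i⟩; rw [reaches_iff X ∅ hsub]; simp [RSet, startMem]
    have hmm := MoV_master hcard hn hh hhg hL (EAEdges X ∪ ∅) False ∅ ∅ H1 H2 H3
    rw [Set.union_empty] at hmm
    rw [hmm, if_neg not_false]
  constructor
  · rintro ⟨E', hE'sub, hpos⟩
    rw [hbase] at hpos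
    by_cases hstart : startMem E'
    · set J : Finset (Fin g) := Finset.univ.filter (fun x => lastMem E' x) with hJdef
      set C : Finset α := Finset.univ.filter (fun z => ∃ x, lastMem E' x ∧ z ∈ X x) with hCdef
      have hCn : C.card ≤ n := by
        have := Finset.card_le_univ C
        simpa [hcard] using this
      have H1 : ∀ i : Fin (n * g - h - 1),
          Reaches (EAEdges X ∪ E') (Sum.inl () : EAVoter α n g h) (Sum.inr (Sum.inl i)) ↔ True := by
        intro i; rw [reaches_iff X E' hE'sub]; simp [RSet, hstart]
      have H2 : ∀ x : Fin g,
          Reaches (EAEdges X ∪ E') (Sum.inl () : EAVoter α n g h)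
            (Sum.inr (Sum.inr (Sum.inl x))) ↔ (True ∧ x ∈ J) := by
        intro x; rw [reaches_iff X E' hE'sub]; simp [RSet, hstart, hJdef]
      have H3 : ∀ p : α × Fin g,
          Reaches (EAEdges X ∪ E') (Sum.inl () : EAVoter α n g h)
            (Sum.inr (Sum.inr (Sum.inr (Sum.inl p)))) ↔ (True ∧ p.1 ∈ C) := by
        rintro ⟨z, i⟩; rw [reaches_iff X E' hE'sub]; simp [RSet, hstart, hCdef]
      have hmm := MoV_master hcard hn hh hhg hL (EAEdges X ∪ E') True J C H1 H2 H3
      rw [hmm, if_pos trivial] at hpos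
      by_cases hCfull : C.card = n
      · refine ⟨J, ?_, ?_⟩
        · have hc1 : ((g : ℤ) * (C.card : ℤ)) = ((n * g : ℕ) : ℤ) := by
            rw [hCfull]; push_cast; ring
          rw [hc1, hc2] at hpos
          omega
        · intro z
          have hCuniv : C = Finset.univ :=
            Finset.eq_univ_of_card C (hCfull.trans hcard.symm)
          have hz : z ∈ C := hCuniv ▸ Finset.mem_univ z
          rw [hCdef, Finset.mem_filter] at hz
          obtain ⟨-, x, hxl, hzx⟩ := hz
          exact ⟨x, by rw [hJdef, Finset.mem_filter]; exact ⟨Finset.mem_univ x, hxl⟩, hzx⟩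
      · exfalso
        by_cases hJ0 : J.card = 0
        · have hJe : J = ∅ := Finset.card_eq_zero.mp hJ0
          have hnolast : ∀ x, ¬ lastMem E' x := by
            intro x hx
            have hxJ : x ∈ J := by rw [hJdef, Finset.mem_filter]; exact ⟨Finset.mem_univ x, hx⟩
            rw [hJe] at hxJ
            exact absurd hxJ (Finset.notMem_empty x)
          have hCe : C = ∅ := by
            rw [hCdef]
            ext z
            simp only [Finset.mem_filter, Finset.mem_univ, true_and, Finset.notMem_empty,
              iff_false, not_exists, not_and]
            intro x hx
            exact absurd hx (hnolast x)
          rw [hCe] at hpos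
          simp only [Finset.card_empty, Nat.cast_zero, mul_zero] at hpos
          rw [hc2] at hpos
          omega
        · have hCle : C.card ≤ n - 1 := by omega
          have hCb : g * C.card + g ≤ n * g := by
            have h1 : g * C.card ≤ g * (n - 1) := Nat.mul_le_mul_left _ hCle
            have h2 : g * (n - 1) + g = g * n := by
              obtain ⟨m, rfl⟩ := Nat.exists_eq_add_of_le hn
              rw [Nat.add_sub_cancel_left, Nat.mul_add, Nat.mul_one]
              omega
            have h3 : g * n = n * g := Nat.mul_comm g n
            omega
          have hc1 : ((g : ℤ) * (C.card : ℤ)) = ((g * C.card : ℕ) : ℤ) := by push_cast; ring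
          rw [hc1, hc2] at hpos
          omega
    · have H1 : ∀ i : Fin (n * g - h - 1),
          Reaches (EAEdges X ∪ E') (Sum.inl () : EAVoter α n g h) (Sum.inr (Sum.inl i)) ↔
            False := by
        intro i; rw [reaches_iff X E' hE'sub]; simp [RSet, hstart]
      have H2 : ∀ x : Fin g,
          Reaches (EAEdges X ∪ E') (Sum.inl () : EAVoter α n g h)
            (Sum.inr (Sum.inr (Sum.inl x))) ↔ (False ∧ x ∈ (∅ : Finset (Fin g))) := by
        intro x; rw [reaches_iff X E' hE'sub]; simp [RSet, hstart]
      have H3 : ∀ p : α × Fin g,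
          Reaches (EAEdges X ∪ E') (Sum.inl () : EAVoter α n g h)
            (Sum.inr (Sum.inr (Sum.inr (Sum.inl p)))) ↔ (False ∧ p.1 ∈ (∅ : Finset α)) := by
        rintro ⟨z, i⟩; rw [reaches_iff X E' hE'sub]; simp [RSet, hstart]
      have hmm := MoV_master hcard hn hh hhg hL (EAEdges X ∪ E') False ∅ ∅ H1 H2 H3
      rw [hmm, if_neg not_false] at hpos
      omega
  · rintro ⟨J, hJcard, hJcover⟩
    set E' : Set (EAVoter α n g h × EAVoter α n g h) :=
      {p | p = (Sum.inl (), Sum.inr (Sum.inl (⟨0, by omega⟩ : Fin (n * g - h - 1)))) ∨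
        ∃ x ∈ J, p = (Sum.inr (Sum.inl (⟨n * g - h - 1 - 1, by omega⟩ : Fin (n * g - h - 1))),
          Sum.inr (Sum.inr (Sum.inl x)))} with hE'def
    have hsub : E' ⊆ EAAddable := by
      rintro p (rfl | ⟨x, hx, rfl⟩)
      · exact Or.inl ⟨⟨0, by omega⟩, rfl, rfl, rfl⟩
      · exact Or.inr ⟨⟨n * g - h - 1 - 1, by omega⟩, x,
          show n * g - h - 1 - 1 + 1 = n * g - h - 1 by omega, rfl, rfl⟩
    have hstart : startMem E' := ⟨⟨0, by omega⟩, rfl, Or.inl rfl⟩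
    have hlast : ∀ x, lastMem E' x ↔ x ∈ J := by
      intro x
      constructor
      · rintro ⟨i, hi, (heq | ⟨x', hx', heq⟩)⟩
        · exact absurd (congrArg Prod.fst heq) (by simp)
        · have hxx : x = x' := by
            have := congrArg Prod.snd heq
            simpa using this
          rw [hxx]; exact hx'
      · intro hx
        exact ⟨⟨n * g - h - 1 - 1, by omega⟩,
          show n * g - h - 1 - 1 + 1 = n * g - h - 1 by omega, Or.inr ⟨x, hx, rfl⟩⟩
    refine ⟨E', hsub, ?_⟩
    have H1 : ∀ i : Fin (n * g - h - 1),
        Reaches (EAEdges X ∪ E') (Sum.inl () : EAVoter α n g h) (Sum.inr (Sum.inl i)) ↔ True := by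
      intro i; rw [reaches_iff X E' hsub]; simp [RSet, hstart]
    have H2 : ∀ x : Fin g,
        Reaches (EAEdges X ∪ E') (Sum.inl () : EAVoter α n g h)
          (Sum.inr (Sum.inr (Sum.inl x))) ↔ (True ∧ x ∈ J) := by
      intro x; rw [reaches_iff X E' hsub]; simp [RSet, hstart, hlast]
    have H3 : ∀ p : α × Fin g,
        Reaches (EAEdges X ∪ E') (Sum.inl () : EAVoter α n g h)
          (Sum.inr (Sum.inr (Sum.inr (Sum.inl p)))) ↔ (True ∧ p.1 ∈ (Finset.univ : Finset α)) := by
      rintro ⟨z, i⟩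
      rw [reaches_iff X E' hsub]
      simp only [RSet, Finset.mem_univ, and_true, true_and, iff_true]
      refine ⟨hstart, ?_⟩
      obtain ⟨x, hxJ, hzx⟩ := hJcover z
      exact ⟨x, (hlast x).mpr hxJ, hzx⟩
    have hmm := MoV_master hcard hn hh hhg hL (EAEdges X ∪ E') True J Finset.univ H1 H2 H3
    rw [hbase, hmm, if_pos trivial]
    rw [Finset.card_univ, hcard]
    have hc1 : ((g : ℤ) * (n : ℤ)) = ((n * g : ℕ) : ℤ) := by push_cast; ring
    rw [hc1, hc2]
    omega

end EdgeAdditionSetCover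
end
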